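/- arXiv:1311.4171 — 7 statements merged into one kernel-verified Lean document; each statement's English description precedes it below -/
import Mathlib

section
/- Let α > 0, p > 1 + α. Suppose q ∈ ℝ, R > 0, L > 0, and f : (q-R, q+R) → [0,∞) is Borel with L/2 ≤ f ≤ 2L. Let 0 < r < R and g(x) = 2L·|(x-q)/r|^α, and define h = min{f, g} on (q-R, q+R). Then there is a constant C > 0 depending only on α and p such that for every interval I ⊆ (q-R, q+R) of positive length, (⨍_I h) · (⨍_I h^{1/(1-p)})^{p-1} ≤ C. -/
open MeasureTheory Set intervalIntegral
open scoped ENNReal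

section AuxApWeight

lemma aux_intInt_abs_rpow {s : ℝ} (hs : -1 < s) (a b : ℝ) :
    IntervalIntegrable (fun y : ℝ => |y| ^ s) volume a b := by
  have key : ∀ c : ℝ, 0 ≤ c → IntervalIntegrable (fun y : ℝ => |y| ^ s) volume 0 c := by
    intro c hc
    have h1 : IntervalIntegrable (fun y : ℝ => y ^ s) volume 0 c :=
      intervalIntegrable_rpow' hs
    rw [intervalIntegrable_iff, uIoc_of_le hc] at h1 ⊢
    exact h1.congr_fun (fun y hy => by rw [abs_of_nonneg (le_of_lt hy.1)]) measurableSet_Ioc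
  have key2 : ∀ c : ℝ, IntervalIntegrable (fun y : ℝ => |y| ^ s) volume 0 c := by
    intro c
    rcases le_or_gt 0 c with hc | hc
    · exact key c hc
    · have := (key (-c) (by linarith)).symm
      have h2 := (IntervalIntegrable.iff_comp_neg).mp this
      simpa using h2.symm
  exact (key2 a).symm.trans (key2 b)

lemma aux_int_abs_rpow {β : ℝ} (hβ0 : 0 < β) (hβ1 : β < 1) {M : ℝ} (hM : 0 ≤ M) :
    ∫ y in (-M)..M, |y| ^ (-β) = 2 * M ^ (1 - β) / (1 - β) := by
  have hint : ∀ u v : ℝ, IntervalIntegrable (fun y : ℝ => |y| ^ (-β)) volume u v :=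
    fun u v => aux_intInt_abs_rpow (by linarith) u v
  have hpos : ∫ y in (0:ℝ)..M, |y| ^ (-β) = M ^ (1 - β) / (1 - β) := by
    rw [integral_congr (g := fun y : ℝ => y ^ (-β)) ?_]
    · rw [integral_rpow (Or.inl (by linarith))]
      rw [Real.zero_rpow (by linarith : -β + 1 ≠ 0)]
      norm_num
      ring_nf
    · intro y hy
      rw [uIcc_of_le hM] at hy
      simp only
      rw [abs_of_nonneg hy.1]
  have hneg : ∫ y in (-M)..(0:ℝ), |y| ^ (-β) = M ^ (1 - β) / (1 - β) := by
    have := integral_comp_neg (a := 0) (b := M) (fun y : ℝ => |y| ^ (-β))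
    simp only [abs_neg, neg_zero] at this
    rw [← this, hpos]
  rw [← integral_add_adjacent_intervals (hint (-M) 0) (hint 0 M), hpos, hneg]
  ring



lemma aux_power_core (α p : ℝ) (hα : 0 < α) (hp : 1 + α < p) :
    ∃ Cp > 0, ∀ a b : ℝ, a < b →
      ((b - a)⁻¹ * ∫ y in a..b, |y| ^ α) *
        ((b - a)⁻¹ * ∫ y in a..b, |y| ^ (-(α / (p - 1)))) ^ (p - 1) ≤ Cp := by
  have hp1 : (0:ℝ) < p - 1 := by linarith
  set β := α / (p - 1) with hβdef
  have hβ0 : 0 < β := div_pos hα hp1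
  have hβ1 : β < 1 := (div_lt_one hp1).mpr (by linarith)
  have hβp : β * (p - 1) = α := div_mul_cancel₀ α (ne_of_gt hp1)
  have h1β : (0:ℝ) < 1 - β := by linarith
  have hdiv : (0:ℝ) < 4 / (1 - β) := by positivity
  refine ⟨(4 / (1 - β)) ^ (p - 1) + 2 ^ α,
    add_pos (Real.rpow_pos_of_pos hdiv _) (Real.rpow_pos_of_pos two_pos _), ?_⟩
  intro a b hab
  set ℓ := b - a with hℓdef
  set M := max |a| |b| with hMdef
  have hℓ : 0 < ℓ := by simp [hℓdef]; linarith
  have haM : |a| ≤ M := le_max_left _ _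
  have hbM : |b| ≤ M := le_max_right _ _
  have hM : 0 < M := by
    rcases abs_le.mp haM with ⟨h1, h2⟩
    rcases abs_le.mp hbM with ⟨h3, h4⟩
    by_contra h; push_neg at h; simp [hℓdef] at hℓ; nlinarith [abs_nonneg a]
  have habsM : ∀ y ∈ Icc a b, |y| ≤ M := by
    intro y hy
    rcases abs_le.mp haM with ⟨h1, _⟩
    rcases abs_le.mp hbM with ⟨_, h4⟩
    exact abs_le.mpr ⟨by linarith [hy.1], by linarith [hy.2]⟩
  have i1 : IntervalIntegrable (fun y : ℝ => |y| ^ α) volume a b :=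
    (continuous_abs.rpow_const (fun x => Or.inr hα.le)).intervalIntegrable a b
  have i2 : IntervalIntegrable (fun y : ℝ => |y| ^ (-β)) volume a b :=
    aux_intInt_abs_rpow (by linarith) a b
  have n1 : 0 ≤ ∫ y in a..b, |y| ^ α :=
    integral_nonneg hab.le fun y _ => Real.rpow_nonneg (abs_nonneg y) α
  have n2 : 0 ≤ ∫ y in a..b, |y| ^ (-β) :=
    integral_nonneg hab.le fun y _ => Real.rpow_nonneg (abs_nonneg y) _
  have hA : ℓ⁻¹ * ∫ y in a..b, |y| ^ α ≤ M ^ α := by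
    have h1 : ∫ y in a..b, |y| ^ α ≤ ∫ _ in a..b, M ^ α :=
      integral_mono_on hab.le i1 intervalIntegrable_const
        (fun y hy => Real.rpow_le_rpow (abs_nonneg y) (habsM y hy) hα.le)
    rw [intervalIntegral.integral_const, smul_eq_mul] at h1
    rw [inv_mul_le_iff₀ hℓ]
    exact h1
  rcases lt_or_ge ℓ (M / 2) with hcase | hcase
  · -- far case
    have hlow : ∀ y ∈ Icc a b, M / 2 ≤ |y| := by
      intro y hy
      rcases le_total |a| |b| with hab' | hab'
      · have hMb : M = |b| := max_eq_right hab'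
        have hb : 0 < b := by
          by_contra h; push_neg at h
          have e1 : |a| = -a := abs_of_nonpos (by linarith)
          have e2 : |b| = -b := abs_of_nonpos h
          simp only [hℓdef] at hcase
          rw [hMb, e2] at hcase
          linarith [hab'.trans_eq e2, e1 ▸ hab']
        have e2 : |b| = b := abs_of_pos hb
        have : M / 2 ≤ y := by rw [hMb, e2]; simp only [hℓdef] at hcase; linarith [hy.1, hMb, e2]
        linarith [le_abs_self y]
      · have hMa : M = |a| := max_eq_left hab'
        have ha : a < 0 := by
          by_contra h; push_neg at h
          have e1 : |a| = a := abs_of_nonneg h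
          have e2 : |b| = b := abs_of_nonneg (by linarith)
          rw [e1, e2] at hab'; linarith
        have e1 : |a| = -a := abs_of_nonpos ha.le
        have : y ≤ -(M / 2) := by
          rw [hMa, e1]; simp only [hℓdef] at hcase; linarith [hy.2]
        linarith [neg_abs_le y]
    have hB : ℓ⁻¹ * ∫ y in a..b, |y| ^ (-β) ≤ (M / 2) ^ (-β) := by
      have h1 : ∫ y in a..b, |y| ^ (-β) ≤ ∫ _ in a..b, (M / 2) ^ (-β) :=
        integral_mono_on hab.le i2 intervalIntegrable_const
          (fun y hy => Real.rpow_le_rpow_of_nonpos (by linarith) (hlow y hy)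
            (neg_nonpos.mpr hβ0.le))
      rw [intervalIntegral.integral_const, smul_eq_mul] at h1
      rw [inv_mul_le_iff₀ hℓ]
      exact h1
    have key : M ^ α * ((M / 2) ^ (-β)) ^ (p - 1) = 2 ^ α := by
      rw [← Real.rpow_mul (by positivity), neg_mul, hβp, Real.rpow_neg (by positivity)]
      have e1 : M ^ α = 2 ^ α * (M / 2) ^ α := by
        rw [← Real.mul_rpow (by norm_num) (by positivity)]
        congr 1; ring
      rw [e1, mul_assoc, mul_inv_cancel₀ (by positivity), mul_one]
    calc ((b-a)⁻¹ * ∫ y in a..b, |y| ^ α) * ((b-a)⁻¹ * ∫ y in a..b, |y| ^ (-β)) ^ (p-1)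
        ≤ M ^ α * ((M / 2) ^ (-β)) ^ (p - 1) := by
          apply mul_le_mul hA
          · exact Real.rpow_le_rpow (by positivity) hB hp1.le
          · positivity
          · positivity
      _ = 2 ^ α := key
      _ ≤ (4 / (1 - β)) ^ (p - 1) + 2 ^ α := le_add_of_nonneg_left (Real.rpow_pos_of_pos hdiv _).le
  · -- near case
    have hB : ℓ⁻¹ * ∫ y in a..b, |y| ^ (-β) ≤ 4 / (1 - β) * M ^ (-β) := by
      have h1 : ∫ y in a..b, |y| ^ (-β) ≤ 2 * M ^ (1 - β) / (1 - β) := by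
        rw [← aux_int_abs_rpow hβ0 hβ1 hM.le]
        apply integral_mono_interval (by linarith [abs_le.mp haM |>.1]) hab.le
          (by linarith [abs_le.mp hbM |>.2])
          (Filter.Eventually.of_forall fun y => Real.rpow_nonneg (abs_nonneg y) _)
          (aux_intInt_abs_rpow (by linarith) _ _)
      have hinv : ℓ⁻¹ ≤ 2 / M := by
        have h2 := inv_anti₀ (show (0:ℝ) < M / 2 by positivity) hcase
        rwa [inv_div] at h2
      have := mul_le_mul hinv h1 n2 (by positivity)
      have eM : M ^ (1 - β) = M * M ^ (-β) := by
        rw [show (1:ℝ) - β = 1 + -β by ring, Real.rpow_add hM, Real.rpow_one]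
      calc ℓ⁻¹ * ∫ y in a..b, |y| ^ (-β) ≤ 2 / M * (2 * M ^ (1 - β) / (1 - β)) := this
        _ = 4 * (M / M) * M ^ (-β) / (1 - β) := by rw [eM]; ring
        _ = 4 / (1 - β) * M ^ (-β) := by rw [div_self hM.ne']; ring
    calc ((b-a)⁻¹ * ∫ y in a..b, |y| ^ α) * ((b-a)⁻¹ * ∫ y in a..b, |y| ^ (-β)) ^ (p-1)
        ≤ M ^ α * (4 / (1 - β) * M ^ (-β)) ^ (p - 1) := by
          apply mul_le_mul hA
          · exact Real.rpow_le_rpow (by positivity) hB hp1.le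
          · positivity
          · positivity
      _ = (4 / (1 - β)) ^ (p - 1) := by
          rw [Real.mul_rpow hdiv.le (Real.rpow_nonneg hM.le _),
            ← Real.rpow_mul hM.le, neg_mul, hβp]
          rw [mul_comm (M ^ α), mul_assoc, ← Real.rpow_add hM]
          simp
      _ ≤ (4 / (1 - β)) ^ (p - 1) + 2 ^ α := le_add_of_nonneg_right (by positivity)



lemma aux_minmax_core (α p : ℝ) (hα : 0 < α) (hp : 1 + α < p) :
    ∃ C0 > 0, ∀ a b : ℝ, a < b →
      ((b - a)⁻¹ * ∫ y in a..b, min 1 (|y| ^ α)) *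
        ((b - a)⁻¹ * ∫ y in a..b, max 1 (|y| ^ (-(α / (p - 1))))) ^ (p - 1) ≤ C0 := by
  have hp1 : (0:ℝ) < p - 1 := by linarith
  obtain ⟨Cp, hCp, hcore⟩ := aux_power_core α p hα hp
  refine ⟨2 ^ (p - 1) * (1 + Cp), by positivity, ?_⟩
  intro a b hab
  set β := α / (p - 1) with hβdef
  have hβ0 : 0 < β := div_pos hα hp1
  have hβ1 : β < 1 := (div_lt_one hp1).mpr (by linarith)
  have hℓ : 0 < b - a := by linarith
  have imin : IntervalIntegrable (fun y : ℝ => min 1 (|y| ^ α)) volume a b :=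
    (continuous_const.min (continuous_abs.rpow_const (fun x => Or.inr hα.le))).intervalIntegrable a b
  have ipow : IntervalIntegrable (fun y : ℝ => |y| ^ α) volume a b :=
    (continuous_abs.rpow_const (fun x => Or.inr hα.le)).intervalIntegrable a b
  have i2 : IntervalIntegrable (fun y : ℝ => |y| ^ (-β)) volume a b :=
    aux_intInt_abs_rpow (by linarith) a b
  have c1 : IntervalIntegrable (fun _ : ℝ => (1:ℝ)) volume a b := intervalIntegrable_const
  have imax : IntervalIntegrable (fun y : ℝ => max 1 (|y| ^ (-β))) volume a b := by
    rw [intervalIntegrable_iff] at c1 i2 ⊢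
    exact c1.sup i2
  have nA : 0 ≤ ∫ y in a..b, min 1 (|y| ^ α) :=
    integral_nonneg hab.le fun y _ => le_min zero_le_one (Real.rpow_nonneg (abs_nonneg y) _)
  have nB : 0 ≤ ∫ y in a..b, max 1 (|y| ^ (-β)) :=
    integral_nonneg hab.le fun y _ => le_max_of_le_left zero_le_one
  have n2 : 0 ≤ ∫ y in a..b, |y| ^ (-β) :=
    integral_nonneg hab.le fun y _ => Real.rpow_nonneg (abs_nonneg y) _
  have hA1 : (b - a)⁻¹ * ∫ y in a..b, min 1 (|y| ^ α) ≤ 1 := by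
    rw [inv_mul_le_iff₀ hℓ, mul_one]
    have h1 : ∫ y in a..b, min 1 (|y| ^ α) ≤ ∫ _ in a..b, (1:ℝ) :=
      integral_mono_on hab.le imin intervalIntegrable_const (fun y _ => min_le_left _ _)
    simpa using h1
  have hA2 : (b - a)⁻¹ * ∫ y in a..b, min 1 (|y| ^ α)
      ≤ (b - a)⁻¹ * ∫ y in a..b, |y| ^ α := by
    apply mul_le_mul_of_nonneg_left _ (by positivity)
    exact integral_mono_on hab.le imin ipow (fun y _ => min_le_right _ _)
  have hBsum : (b - a)⁻¹ * ∫ y in a..b, max 1 (|y| ^ (-β))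
      ≤ 1 + (b - a)⁻¹ * ∫ y in a..b, |y| ^ (-β) := by
    have h1 : ∫ y in a..b, max 1 (|y| ^ (-β)) ≤ ∫ y in a..b, (1 + |y| ^ (-β)) :=
      integral_mono_on hab.le imax (c1.add i2) (fun y _ =>
        max_le (le_add_of_nonneg_right (Real.rpow_nonneg (abs_nonneg y) _))
          (le_add_of_nonneg_left zero_le_one))
    rw [integral_add c1 i2] at h1
    simp only [intervalIntegral.integral_const, smul_eq_mul, mul_one] at h1
    calc (b - a)⁻¹ * ∫ y in a..b, max 1 (|y| ^ (-β))
        ≤ (b - a)⁻¹ * ((b - a) + ∫ y in a..b, |y| ^ (-β)) :=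
          mul_le_mul_of_nonneg_left h1 (by positivity)
      _ = 1 + (b - a)⁻¹ * ∫ y in a..b, |y| ^ (-β) := by
          rw [mul_add, inv_mul_cancel₀ hℓ.ne']
  set A : ℝ := (b - a)⁻¹ * ∫ y in a..b, min 1 (|y| ^ α) with hAdef
  set B : ℝ := (b - a)⁻¹ * ∫ y in a..b, max 1 (|y| ^ (-β)) with hBdef
  set A2 : ℝ := (b - a)⁻¹ * ∫ y in a..b, |y| ^ α with hA2def
  set B2 : ℝ := (b - a)⁻¹ * ∫ y in a..b, |y| ^ (-β) with hB2def
  have hApos : 0 ≤ A := by positivity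
  have hBpos : 0 ≤ B := by positivity
  have hB2pos : 0 ≤ B2 := by positivity
  have hA2pos : 0 ≤ A2 := by
    have : 0 ≤ ∫ y in a..b, |y| ^ α :=
      integral_nonneg hab.le fun y _ => Real.rpow_nonneg (abs_nonneg y) _
    positivity
  have hprod := hcore a b hab
  rcases le_or_gt B2 1 with hc | hc
  · have hB2' : B ≤ 2 := by linarith
    calc A * B ^ (p - 1) ≤ 1 * 2 ^ (p - 1) := by
          apply mul_le_mul hA1 (Real.rpow_le_rpow hBpos hB2' hp1.le) (by positivity) zero_le_one
      _ = 2 ^ (p - 1) := one_mul _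
      _ ≤ 2 ^ (p - 1) * (1 + Cp) := le_mul_of_one_le_right (by positivity) (by linarith)
  · have hB2' : B ≤ 2 * B2 := by linarith
    calc A * B ^ (p - 1) ≤ A2 * (2 * B2) ^ (p - 1) := by
          apply mul_le_mul hA2 (Real.rpow_le_rpow hBpos hB2' hp1.le) (by positivity) hA2pos
      _ = 2 ^ (p - 1) * (A2 * B2 ^ (p - 1)) := by
          rw [Real.mul_rpow (by norm_num) hB2pos]; ring
      _ ≤ 2 ^ (p - 1) * Cp :=
          mul_le_mul_of_nonneg_left hprod (by positivity)
      _ ≤ 2 ^ (p - 1) * (1 + Cp) := by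
          apply mul_le_mul_of_nonneg_left (by linarith) (by positivity)

lemma aux_scaled_core (α p : ℝ) (hα : 0 < α) (hp : 1 + α < p) :
    ∃ C0 > 0, ∀ q r : ℝ, 0 < r → ∀ a b : ℝ, a < b →
      ((b - a)⁻¹ * ∫ x in a..b, min 1 (|(x - q) / r| ^ α)) *
        ((b - a)⁻¹ * ∫ x in a..b, max 1 (|(x - q) / r| ^ (-(α / (p - 1))))) ^ (p - 1)
      ≤ C0 := by
  obtain ⟨C0, hC0, hcore⟩ := aux_minmax_core α p hα hp
  refine ⟨C0, hC0, ?_⟩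
  intro q r hr a b hab
  have key : ∀ F : ℝ → ℝ, ∫ x in a..b, F ((x - q) / r)
      = r * ∫ y in (a - q) / r..(b - q) / r, F y := by
    intro F
    have h1 : ∫ x in a..b, F ((x - q) / r) = ∫ u in a - q..b - q, F (u / r) :=
      intervalIntegral.integral_comp_sub_right (fun u => F (u / r)) q
    rw [h1, intervalIntegral.integral_comp_div (f := F) (ne_of_gt hr), smul_eq_mul]
  have halg : ∀ I : ℝ, (b - a)⁻¹ * (r * I) = ((b - q) / r - (a - q) / r)⁻¹ * I := by
    intro I
    rw [show (b - q) / r - (a - q) / r = (b - a) / r by ring, div_eq_mul_inv, mul_inv, inv_inv]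
    ring
  rw [key (fun y => min 1 (|y| ^ α)), key (fun y => max 1 (|y| ^ (-(α / (p - 1))))),
    halg, halg]
  exact hcore _ _ (by
    have : 0 < (b - a) / r := div_pos (by linarith) hr
    have h2 : (b - q) / r - (a - q) / r = (b - a) / r := by ring
    linarith)



/-- a uniform local `A_p` estimate for `h = min{f, 2L|(x-q)/r|^α}`,
with constant depending only on `α` and `p`. -/
theorem stmt_1 (α p : ℝ) (hα : 0 < α) (hp : 1 + α < p) :
    ∃ C > 0, ∀ (q R L r : ℝ) (f : ℝ → ℝ), 0 < R → 0 < L → 0 < r → r < R →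
      Measurable f →
      (∀ x ∈ Set.Ioo (q - R) (q + R), L / 2 ≤ f x ∧ f x ≤ 2 * L) →
      ∀ a b : ℝ, a < b → Set.Icc a b ⊆ Set.Ioo (q - R) (q + R) →
      ((b - a)⁻¹ * ∫ x in a..b, min (f x) (2 * L * |(x - q) / r| ^ α)) *
        ((b - a)⁻¹ *
            ∫ x in a..b, (min (f x) (2 * L * |(x - q) / r| ^ α)) ^ (1 / (1 - p))) ^ (p - 1)
        ≤ C := by
  have hp1 : (0:ℝ) < p - 1 := by linarith
  obtain ⟨C0, hC0, hcore⟩ := aux_scaled_core α p hα hp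
  refine ⟨4 * C0, by positivity, ?_⟩
  intro q R L r f hR hL hr hrR hf hfb a b hab hsub
  have hℓ : (0:ℝ) < b - a := by linarith
  set β := α / (p - 1) with hβdef
  have hβ0 : 0 < β := div_pos hα hp1
  have hβ1 : β < 1 := (div_lt_one hp1).mpr (by linarith)
  set c : ℝ := 1 / (1 - p) with hcdef
  have hcneg : c < 0 := div_neg_of_pos_of_neg one_pos (by linarith)
  have h1p : (1:ℝ) - p ≠ 0 := by intro h; linarith
  have hαc : α * c = -β := by rw [hβdef, hcdef]; field_simp; ring
  have hc1 : c * (p - 1) = -1 := by rw [hcdef]; field_simp; ring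
  set g : ℝ → ℝ := fun x => 2 * L * |(x - q) / r| ^ α with hgdef
  have hmem : ∀ x ∈ Icc a b, x ∈ Ioo (q - R) (q + R) := fun x hx => hsub hx
  -- pointwise bounds
  have ptpos : ∀ x ∈ Icc a b, 0 ≤ min (f x) (g x) := by
    intro x hx
    refine le_min (le_trans (by linarith) (hfb x (hmem x hx)).1) ?_
    have : (0:ℝ) ≤ |(x - q) / r| ^ α := Real.rpow_nonneg (abs_nonneg _) _
    rw [hgdef]; positivity
  have ptU : ∀ x ∈ Icc a b, min (f x) (g x) ≤ 2 * L * min 1 (|(x - q) / r| ^ α) := by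
    intro x hx
    rw [mul_min_of_nonneg _ _ (by positivity : (0:ℝ) ≤ 2 * L), mul_one]
    exact min_le_min (hfb x (hmem x hx)).2 le_rfl
  have ptlow : ∀ x ∈ Icc a b, L / 2 * min 1 (|(x - q) / r| ^ α) ≤ min (f x) (g x) := by
    intro x hx
    have hu : (0:ℝ) ≤ |(x - q) / r| ^ α := Real.rpow_nonneg (abs_nonneg _) _
    refine le_min ?_ ?_
    · calc L / 2 * min 1 (|(x - q) / r| ^ α) ≤ L / 2 * 1 :=
            mul_le_mul_of_nonneg_left (min_le_left _ _) (by positivity)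
        _ = L / 2 := mul_one _
        _ ≤ f x := (hfb x (hmem x hx)).1
    · calc L / 2 * min 1 (|(x - q) / r| ^ α) ≤ L / 2 * |(x - q) / r| ^ α :=
            mul_le_mul_of_nonneg_left (min_le_right _ _) (by positivity)
        _ ≤ 2 * L * |(x - q) / r| ^ α := by nlinarith
  have ptc : ∀ x ∈ Icc a b,
      (min (f x) (g x)) ^ c ≤ (L / 2) ^ c * max 1 (|(x - q) / r| ^ (-β)) := by
    intro x hx
    by_cases hxq : x = q
    · have hu : |(x - q) / r| ^ α = 0 := by
        rw [hxq]; simp [Real.zero_rpow hα.ne']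
      have hg0 : g x = 0 := by rw [hgdef]; simp only; rw [hu, mul_zero]
      have : min (f x) (g x) = 0 := by
        rw [hg0]
        exact min_eq_right (le_trans (by linarith) (hfb x (hmem x hx)).1)
      rw [this, Real.zero_rpow hcneg.ne]
      have : (0:ℝ) ≤ (L / 2) ^ c := Real.rpow_nonneg (by positivity) _
      have h2 : (0:ℝ) ≤ max 1 (|(x - q) / r| ^ (-β)) := le_max_of_le_left zero_le_one
      positivity
    · have ht : (x - q) / r ≠ 0 := div_ne_zero (sub_ne_zero.mpr hxq) hr.ne'
      have hu : (0:ℝ) < |(x - q) / r| ^ α :=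
        Real.rpow_pos_of_pos (abs_pos.mpr ht) _
      have hm : (0:ℝ) < min 1 (|(x - q) / r| ^ α) := lt_min one_pos hu
      have hlm : (0:ℝ) < L / 2 * min 1 (|(x - q) / r| ^ α) := by positivity
      have step1 : (min (f x) (g x)) ^ c ≤ (L / 2 * min 1 (|(x - q) / r| ^ α)) ^ c :=
        Real.rpow_le_rpow_of_nonpos hlm (ptlow x hx) hcneg.le
      have step2 : (L / 2 * min 1 (|(x - q) / r| ^ α)) ^ c
          = (L / 2) ^ c * (min 1 (|(x - q) / r| ^ α)) ^ c :=
        Real.mul_rpow (by positivity) hm.le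
      have step3 : (min 1 (|(x - q) / r| ^ α)) ^ c ≤ max 1 (|(x - q) / r| ^ (-β)) := by
        rcases le_total (|(x - q) / r| ^ α) 1 with h1 | h1
        · rw [min_eq_right h1, ← Real.rpow_mul (abs_nonneg _), hαc]
          exact le_max_right _ _
        · rw [min_eq_left h1, Real.one_rpow]
          exact le_max_left _ _
      calc (min (f x) (g x)) ^ c ≤ (L / 2 * min 1 (|(x - q) / r| ^ α)) ^ c := step1
        _ = (L / 2) ^ c * (min 1 (|(x - q) / r| ^ α)) ^ c := step2
        _ ≤ (L / 2) ^ c * max 1 (|(x - q) / r| ^ (-β)) :=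
            mul_le_mul_of_nonneg_left step3 (Real.rpow_nonneg (by positivity) _)
  -- integrability
  have gcont : Continuous g := by
    rw [hgdef]
    exact continuous_const.mul
      ((((continuous_id.sub continuous_const).div_const r).abs).rpow_const
        (fun x => Or.inr hα.le))
  have hmeas : Measurable fun x => min (f x) (g x) := hf.min gcont.measurable
  have ih : IntervalIntegrable (fun x => min (f x) (g x)) volume a b := by
    rw [intervalIntegrable_iff, uIoc_of_le hab.le]
    apply Integrable.mono' (g := fun _ => 2 * L)
      (integrableOn_const measure_Ioc_lt_top.ne)
      hmeas.aestronglyMeasurable.restrict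
    filter_upwards [ae_restrict_mem measurableSet_Ioc] with x hx
    have hx' : x ∈ Icc a b := Ioc_subset_Icc_self hx
    rw [Real.norm_eq_abs, abs_of_nonneg (ptpos x hx')]
    exact le_trans (min_le_left _ _) (hfb x (hmem x hx')).2
  have iminb : IntervalIntegrable (fun x => 2 * L * min 1 (|(x - q) / r| ^ α)) volume a b :=
    (continuous_const.mul (continuous_const.min
      ((((continuous_id.sub continuous_const).div_const r).abs).rpow_const
        (fun x => Or.inr hα.le)))).intervalIntegrable a b
  have ipow : IntervalIntegrable (fun x => |(x - q) / r| ^ (-β)) volume a b := by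
    have e : ∀ x : ℝ, |(x - q) / r| ^ (-β) = |x - q| ^ (-β) * r ^ β := by
      intro x
      rw [abs_div, abs_of_pos hr, Real.div_rpow (abs_nonneg _) hr.le,
        Real.rpow_neg hr.le, div_eq_mul_inv, inv_inv]
    have h1 := (aux_intInt_abs_rpow (show (-1:ℝ) < -β by linarith) (a - q) (b - q)).comp_sub_right q
    simp only [sub_add_cancel] at h1
    simp_rw [e]
    exact h1.mul_const _
  have c1 : IntervalIntegrable (fun _ : ℝ => (1:ℝ)) volume a b := intervalIntegrable_const
  have imax : IntervalIntegrable (fun x => max 1 (|(x - q) / r| ^ (-β))) volume a b := by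
    rw [intervalIntegrable_iff] at c1 ipow ⊢
    exact c1.sup ipow
  have imaxc : IntervalIntegrable
      (fun x => (L / 2) ^ c * max 1 (|(x - q) / r| ^ (-β))) volume a b :=
    imax.const_mul _
  have ihc : IntervalIntegrable (fun x => (min (f x) (g x)) ^ c) volume a b := by
    rw [intervalIntegrable_iff, uIoc_of_le hab.le]
    rw [intervalIntegrable_iff, uIoc_of_le hab.le] at imaxc
    apply Integrable.mono' imaxc (hmeas.pow_const c).aestronglyMeasurable.restrict
    filter_upwards [ae_restrict_mem measurableSet_Ioc] with x hx
    have hx' : x ∈ Icc a b := Ioc_subset_Icc_self hx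
    rw [Real.norm_eq_abs, abs_of_nonneg (Real.rpow_nonneg (ptpos x hx') _)]
    exact ptc x hx'
  -- integral bounds
  have nJ1 : 0 ≤ ∫ x in a..b, min 1 (|(x - q) / r| ^ α) :=
    integral_nonneg hab.le fun x _ => le_min zero_le_one (Real.rpow_nonneg (abs_nonneg _) _)
  have nJ2 : 0 ≤ ∫ x in a..b, max 1 (|(x - q) / r| ^ (-β)) :=
    integral_nonneg hab.le fun x _ => le_max_of_le_left zero_le_one
  have nI2 : 0 ≤ ∫ x in a..b, (min (f x) (g x)) ^ c :=
    integral_nonneg hab.le fun x hx => Real.rpow_nonneg (ptpos x hx) _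
  have int1 : ∫ x in a..b, min (f x) (g x)
      ≤ 2 * L * ∫ x in a..b, min 1 (|(x - q) / r| ^ α) := by
    rw [← intervalIntegral.integral_const_mul]
    exact integral_mono_on hab.le ih iminb ptU
  have int2 : ∫ x in a..b, (min (f x) (g x)) ^ c
      ≤ (L / 2) ^ c * ∫ x in a..b, max 1 (|(x - q) / r| ^ (-β)) := by
    rw [← intervalIntegral.integral_const_mul]
    exact integral_mono_on hab.le ihc imaxc ptc
  -- final algebra
  set J1 := ∫ x in a..b, min 1 (|(x - q) / r| ^ α) with hJ1
  set J2 := ∫ x in a..b, max 1 (|(x - q) / r| ^ (-β)) with hJ2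
  have hLc : ((L / 2) ^ c) ^ (p - 1) = (L / 2)⁻¹ := by
    rw [← Real.rpow_mul (by positivity : (0:ℝ) ≤ L / 2), hc1, Real.rpow_neg_one]
  have step : ((b - a)⁻¹ * (2 * L * J1)) * ((b - a)⁻¹ * ((L / 2) ^ c * J2)) ^ (p - 1)
      ≤ 4 * C0 := by
    have e2 : ((b - a)⁻¹ * ((L / 2) ^ c * J2)) ^ (p - 1)
        = (L / 2)⁻¹ * ((b - a)⁻¹ * J2) ^ (p - 1) := by
      rw [show (b - a)⁻¹ * ((L / 2) ^ c * J2) = (L / 2) ^ c * ((b - a)⁻¹ * J2) by ring,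
        Real.mul_rpow (Real.rpow_nonneg (by positivity) _) (by positivity), hLc]
    rw [e2]
    have e3 : (b - a)⁻¹ * (2 * L * J1) * ((L / 2)⁻¹ * ((b - a)⁻¹ * J2) ^ (p - 1))
        = (2 * L * (L / 2)⁻¹) * (((b - a)⁻¹ * J1) * ((b - a)⁻¹ * J2) ^ (p - 1)) := by ring
    rw [e3, show 2 * L * (L / 2)⁻¹ = 4 by field_simp; ring]
    have := hcore q r hr a b hab
    apply mul_le_mul_of_nonneg_left _ (by norm_num)
    exact this
  calc ((b - a)⁻¹ * ∫ x in a..b, min (f x) (g x)) *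
        ((b - a)⁻¹ * ∫ x in a..b, (min (f x) (g x)) ^ c) ^ (p - 1)
      ≤ ((b - a)⁻¹ * (2 * L * J1)) * ((b - a)⁻¹ * ((L / 2) ^ c * J2)) ^ (p - 1) := by
        apply mul_le_mul (mul_le_mul_of_nonneg_left int1 (by positivity))
        · exact Real.rpow_le_rpow (by positivity)
            (mul_le_mul_of_nonneg_left int2 (by positivity)) hp1.le
        · exact Real.rpow_nonneg (by positivity) _
        · have : (0:ℝ) ≤ 2 * L * J1 := by positivity
          positivity
    _ ≤ 4 * C0 := step

end AuxApWeight
end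

section
/- Let μ be a locally finite Borel measure on ℝ with Lebesgue decomposition μ = f_a·L¹ + μ_s (μ_s singular). Let p > 1 and [a,b] ⊂ ℝ with a < b, and let γ_{[a,b]}(t) = t be the identity curve on [a,b]. Then Mod_{p,μ}({γ_{[a,b]}}) > 0 if and only if f_a^{1/(1-p)} is Lebesgue integrable on [a,b]. -/
open MeasureTheory Set
open scoped ENNReal

noncomputable section

lemma rpow_anti {x y : ℝ≥0∞} {e : ℝ} (he : e ≤ 0) (h : x ≤ y) : y ^ e ≤ x ^ e := by
  have h1 : y ^ e = (y ^ (-e))⁻¹ := by rw [← ENNReal.rpow_neg, neg_neg]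
  have h2 : x ^ e = (x ^ (-e))⁻¹ := by rw [← ENNReal.rpow_neg, neg_neg]
  rw [h1, h2]
  exact ENNReal.inv_le_inv.2 (ENNReal.rpow_le_rpow h (neg_nonneg.2 he))

lemma sup_pow_sup : ∀ x : ℝ≥0∞, ∀ e : ℝ, e < 0 →
    (⨆ n : ℕ, (x ⊔ ((n : ℝ≥0∞) + 1)⁻¹) ^ e) = x ^ e := by
  intro x e he
  rcases eq_or_ne x 0 with h0 | h0
  · simp only [h0, ENNReal.zero_rpow_of_neg he]
    have hsup : ∀ n : ℕ, (0 : ℝ≥0∞) ⊔ ((n : ℝ≥0∞) + 1)⁻¹ = ((n : ℝ≥0∞) + 1)⁻¹ :=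
      fun n => sup_eq_right.2 zero_le
    simp only [hsup]
    apply ENNReal.eq_top_of_forall_nnreal_le
    intro r
    obtain ⟨n, hn⟩ := exists_nat_ge ((r : ℝ) ^ (1 / (-e)))
    refine le_trans ?_ (le_iSup _ n)
    have h1 : (((n : ℝ≥0∞) + 1)⁻¹) ^ e = ((n : ℝ≥0∞) + 1) ^ (-e) := by
      rw [ENNReal.inv_rpow, ← ENNReal.rpow_neg]
    rw [h1]
    have hr : (r : ℝ≥0∞) = (ENNReal.ofReal ((r : ℝ) ^ (1 / (-e)))) ^ (-e) := by
      rw [ENNReal.ofReal_rpow_of_nonneg (Real.rpow_nonneg r.coe_nonneg _) (by linarith),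
        ← Real.rpow_mul r.coe_nonneg, one_div_mul_cancel (by linarith : -e ≠ 0),
        Real.rpow_one, ENNReal.ofReal_coe_nnreal]
    rw [hr]
    refine ENNReal.rpow_le_rpow ?_ (by linarith)
    calc ENNReal.ofReal ((r : ℝ) ^ (1 / (-e))) ≤ ENNReal.ofReal (n : ℝ) :=
          ENNReal.ofReal_le_ofReal hn
      _ = (n : ℝ≥0∞) := ENNReal.ofReal_natCast n
      _ ≤ (n : ℝ≥0∞) + 1 := le_self_add
  · refine le_antisymm (iSup_le fun n => rpow_anti he.le le_sup_left) ?_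
    obtain ⟨n, hn⟩ := ENNReal.exists_inv_nat_lt h0
    refine le_trans (le_of_eq ?_) (le_iSup _ n)
    congr 1
    refine (sup_eq_left.2 ?_).symm
    calc ((n : ℝ≥0∞) + 1)⁻¹ ≤ ((n : ℝ≥0∞))⁻¹ := ENNReal.inv_le_inv.2 le_self_add
      _ ≤ x := hn.le



/-- The `p`-modulus (with respect to `μ`) of the singleton family consisting of the
identity curve `γ_{[a,b]}(t) = t` on `[a,b]` (whose metric speed is `1`). -/
def ModSingle (μ : Measure ℝ) (p a b : ℝ) : ℝ≥0∞ :=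
  ⨅ (g : ℝ → ℝ≥0∞) (_ : Measurable g) (_ : 1 ≤ ∫⁻ x in Set.Icc a b, g x),
    ∫⁻ x, g x ^ p ∂μ

/-- `Mod_{p,μ}({γ_{[a,b]}}) > 0` iff `f_a^{1/(1-p)}` is Lebesgue integrable
on `[a,b]` (with the convention `0^{1/(1-p)} = ∞`, built into `ℝ≥0∞`-valued `rpow`). -/
theorem stmt_7 (μ : Measure ℝ) [IsLocallyFiniteMeasure μ]
    (fa : ℝ → ℝ≥0∞) (hfa : Measurable fa) (μs : Measure ℝ)
    (hsing : μs ⟂ₘ volume) (hdecomp : μ = volume.withDensity fa + μs)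
    (p : ℝ) (hp : 1 < p) (a b : ℝ) (hab : a < b) :
    0 < ModSingle μ p a b ↔ (∫⁻ x in Set.Icc a b, fa x ^ (1 / (1 - p))) < ⊤ := by
  have hp0 : (0:ℝ) < p := by linarith
  have hp1 : p - 1 ≠ 0 := by intro h; linarith [sub_eq_zero.1 h]
  have h1p : (1:ℝ) - p ≠ 0 := by intro h; nlinarith [sub_eq_zero.1 h]
  set e : ℝ := 1 / (1 - p) with he_def
  have he : e < 0 := div_neg_of_pos_of_neg one_pos (by linarith)
  have hIccm : MeasurableSet (Icc a b) := measurableSet_Icc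
  have hvol_ne : volume.restrict (Icc a b) ≠ 0 := by
    rw [Ne, Measure.restrict_eq_zero, Real.volume_Icc]
    simp only [ENNReal.ofReal_eq_zero, not_le]
    linarith
  haveI : (ae (volume.restrict (Icc a b))).NeBot := ae_neBot.2 hvol_ne
  have hwd_le : volume.withDensity fa ≤ μ := by
    rw [hdecomp]; exact Measure.le_add_right le_rfl
  have hfa_int : (∫⁻ x in Icc a b, fa x) < ⊤ := by
    rw [← withDensity_apply fa hIccm]
    exact lt_of_le_of_lt (Measure.le_iff'.1 hwd_le (Icc a b)) isCompact_Icc.measure_lt_top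
  have hfa_fin : ∀ᵐ x ∂(volume.restrict (Icc a b)), fa x < ⊤ := ae_lt_top hfa hfa_int.ne
  constructor
  · intro hpos
    by_contra htop
    rw [not_lt, top_le_iff] at htop
    obtain ⟨S, hSm, hμsS, hvolSc⟩ := hsing
    set c : ℕ → ℝ → ℝ≥0∞ := fun n x => fa x ⊔ ((n : ℝ≥0∞) + 1)⁻¹ with hc_def
    have hc_meas : ∀ n, Measurable fun x => c n x ^ e := fun n =>
      (hfa.sup measurable_const).pow_const e
    have hn1top : ∀ n : ℕ, ((n : ℝ≥0∞) + 1) ≠ ⊤ :=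
      fun n => ENNReal.add_ne_top.2 ⟨ENNReal.natCast_ne_top n, ENNReal.one_ne_top⟩
    have hcne0 : ∀ n x, c n x ≠ 0 :=
      fun n x => (lt_of_lt_of_le (ENNReal.inv_pos.2 (hn1top n)) le_sup_right).ne'
    set In : ℕ → ℝ≥0∞ := fun n => ∫⁻ x in Icc a b, c n x ^ e with hIn_def
    have hmono : Monotone fun n => fun x => c n x ^ e := by
      intro m n hmn
      refine fun x => rpow_anti he.le (sup_le_sup_left (ENNReal.inv_le_inv.2 ?_) _)
      exact add_le_add_left (Nat.cast_le.2 hmn) 1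
    have hIsup : (⨆ n, In n) = ⊤ := by
      calc (⨆ n, In n) = ∫⁻ x in Icc a b, ⨆ n, c n x ^ e :=
            (lintegral_iSup hc_meas hmono).symm
        _ = ∫⁻ x in Icc a b, fa x ^ e := lintegral_congr fun x => sup_pow_sup (fa x) e he
        _ = ⊤ := htop
    have hIn_top : ∀ n, In n ≠ ⊤ := by
      intro n
      refine ne_of_lt (lt_of_le_of_lt
        (lintegral_mono fun x => rpow_anti he.le le_sup_right) ?_)
      rw [setLIntegral_const]
      refine ENNReal.mul_lt_top ?_ ?_
      · rw [ENNReal.inv_rpow, ← ENNReal.rpow_neg]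
        exact ENNReal.rpow_lt_top_of_nonneg (by linarith) (hn1top n)
      · rw [Real.volume_Icc]; exact ENNReal.ofReal_lt_top
    have hIn_ne0 : ∀ n, In n ≠ 0 := by
      intro n h0
      have h0' : (∫⁻ x in Icc a b, c n x ^ e) = 0 := h0
      rw [lintegral_eq_zero_iff (hc_meas n)] at h0'
      obtain ⟨x, hx0, hxfin⟩ := (h0'.and hfa_fin).exists
      rw [Pi.zero_apply, ENNReal.rpow_eq_zero_iff] at hx0
      rcases hx0 with ⟨h, _⟩ | ⟨h, _⟩
      · exact hcne0 n x h
      · have : c n x < ⊤ := sup_lt_iff.2 ⟨hxfin, lt_top_iff_ne_top.2 (by simp [ENNReal.inv_eq_top])⟩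
        exact this.ne h
    have hSvol : ∀ᵐ x ∂(volume : Measure ℝ), x ∈ S := by
      rw [ae_iff]; exact hvolSc
    have hSae_vol : ∀ᵐ x ∂(volume.restrict (Icc a b)), x ∈ S := ae_restrict_of_ae hSvol
    have hkey : ∀ n, ModSingle μ p a b ≤ In n ^ (1 - p) := by
      intro n
      set g : ℝ → ℝ≥0∞ := (Icc a b ∩ S).indicator (fun x => c n x ^ e * (In n)⁻¹) with hg_def
      have hg_meas : Measurable g := ((hc_meas n).mul_const _).indicator (hIccm.inter hSm)
      have hadm : (1:ℝ≥0∞) ≤ ∫⁻ x in Icc a b, g x := by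
        have hae : g =ᵐ[volume.restrict (Icc a b)] fun x => c n x ^ e * (In n)⁻¹ := by
          filter_upwards [self_mem_ae_restrict hIccm, hSae_vol] with x hx1 hx2
          rw [hg_def]
          exact indicator_of_mem (Set.mem_inter hx1 hx2) _
        rw [lintegral_congr_ae hae, lintegral_mul_const _ (hc_meas n)]
        show (1:ℝ≥0∞) ≤ In n * (In n)⁻¹
        rw [ENNReal.mul_inv_cancel (hIn_ne0 n) (hIn_top n)]
      refine le_trans (iInf_le_of_le g (iInf_le_of_le hg_meas (iInf_le _ hadm))) ?_
      rw [hdecomp, lintegral_add_measure]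
      have hμs0 : (∫⁻ x, g x ^ p ∂μs) = 0 := by
        have h0 : (fun x => g x ^ p) =ᵐ[μs] 0 := by
          have hSc : ∀ᵐ x ∂μs, x ∉ S := by
            rw [ae_iff]
            simpa using hμsS
          filter_upwards [hSc] with x hx
          rw [hg_def, indicator_of_notMem (fun h => hx h.2),
            ENNReal.zero_rpow_of_pos hp0, Pi.zero_apply]
        rw [lintegral_congr_ae h0]
        simp
      rw [hμs0, add_zero,
        lintegral_withDensity_eq_lintegral_mul volume hfa (hg_meas.pow_const p)]
      have hptw : (fun x => (fa * fun x => g x ^ p) x) ≤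
          fun x => (Icc a b ∩ S).indicator (fun x => c n x ^ e) x * ((In n)⁻¹) ^ p := by
        intro x
        simp only [Pi.mul_apply, hg_def]
        by_cases hx : x ∈ Icc a b ∩ S
        · rw [indicator_of_mem hx, indicator_of_mem hx,
            ENNReal.mul_rpow_of_nonneg _ _ hp0.le, ← mul_assoc]
          refine mul_le_mul_left ?_ _
          rcases eq_or_ne (c n x) ⊤ with ht | hfin
          · rw [ht, ENNReal.top_rpow_of_neg he, ENNReal.zero_rpow_of_pos hp0, mul_zero]
          · calc fa x * (c n x ^ e) ^ p ≤ c n x * (c n x ^ e) ^ p :=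
                  mul_le_mul_left le_sup_left _
              _ = c n x ^ (1 + e * p) := by
                rw [← ENNReal.rpow_mul, ENNReal.rpow_add _ _ (hcne0 n x) hfin,
                  ENNReal.rpow_one]
              _ = c n x ^ e := by
                congr 1
                rw [he_def]
                field_simp
                ring
        · rw [indicator_of_notMem hx, indicator_of_notMem hx,
            ENNReal.zero_rpow_of_pos hp0, mul_zero]
          exact zero_le
      refine le_trans (lintegral_mono hptw) ?_
      rw [lintegral_mul_const _ ((hc_meas n).indicator (hIccm.inter hSm)),
        lintegral_indicator (hIccm.inter hSm)]
      have hIS : (∫⁻ x in Icc a b ∩ S, c n x ^ e) = In n := by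
        rw [← lintegral_indicator (hIccm.inter hSm),
          show In n = ∫⁻ x in Icc a b, c n x ^ e from rfl, ← lintegral_indicator hIccm]
        refine lintegral_congr_ae ?_
        filter_upwards [hSvol] with x hx
        by_cases hIc : x ∈ Icc a b
        · rw [indicator_of_mem (Set.mem_inter hIc hx), indicator_of_mem hIc]
        · rw [indicator_of_notMem (fun h => hIc h.1), indicator_of_notMem hIc]
      rw [hIS, ENNReal.inv_rpow, ← ENNReal.rpow_neg, sub_eq_add_neg,
        ENNReal.rpow_add _ _ (hIn_ne0 n) (hIn_top n), ENNReal.rpow_one]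
    have hmod0 : ModSingle μ p a b = 0 := by
      refine le_antisymm (le_trans (le_iInf hkey) (le_of_eq ?_)) zero_le
      have h2 : ∀ n, In n ^ (1 - p) = (In n ^ (p - 1))⁻¹ := fun n => by
        rw [show (1 - p) = -(p-1) by ring, ENNReal.rpow_neg]
      simp only [h2]
      rw [← ENNReal.inv_iSup, ENNReal.inv_eq_zero, iSup_eq_top]
      intro b' hb'
      have hb1 : (b' + 1) ≠ ⊤ := ENNReal.add_ne_top.2 ⟨hb'.ne, ENNReal.one_ne_top⟩
      obtain ⟨n, hn⟩ := iSup_eq_top.1 hIsup ((b' + 1) ^ (1/(p-1)))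
        (ENNReal.rpow_lt_top_of_nonneg (le_of_lt (div_pos one_pos (by linarith))) hb1)
      refine ⟨n, lt_of_lt_of_le (ENNReal.lt_add_right hb'.ne one_ne_zero) ?_⟩
      calc b' + 1 = ((b' + 1) ^ (1/(p-1))) ^ (p-1) := by
            rw [← ENNReal.rpow_mul, one_div_mul_cancel hp1, ENNReal.rpow_one]
        _ ≤ In n ^ (p-1) := ENNReal.rpow_le_rpow hn.le (by linarith)
    exact absurd hmod0 hpos.ne'
  · -- I < ⊤ → 0 < Mod
    intro hI
    set I : ℝ≥0∞ := ∫⁻ x in Icc a b, fa x ^ e with hI_def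
    have hfae_fin : ∀ᵐ x ∂(volume.restrict (Icc a b)), fa x ^ e < ⊤ :=
      ae_lt_top (hfa.pow_const e) hI.ne
    have hfane : ∀ᵐ x ∂(volume.restrict (Icc a b)), fa x ≠ 0 := by
      filter_upwards [hfae_fin] with x hx h0
      rw [h0, ENNReal.zero_rpow_of_neg he] at hx
      exact lt_irrefl _ hx
    have hIne0 : I ≠ 0 := by
      intro h0
      rw [hI_def, lintegral_eq_zero_iff (hfa.pow_const e)] at h0
      obtain ⟨x, hx0, hxfin, hxne⟩ := (h0.and (hfa_fin.and hfane)).exists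
      rw [Pi.zero_apply, ENNReal.rpow_eq_zero_iff] at hx0
      rcases hx0 with ⟨h, h'⟩ | ⟨h, _⟩
      · exact hxne h
      · exact hxfin.ne h
    have hpq : p.HolderConjugate (p / (p - 1)) := Real.HolderConjugate.conjExponent hp
    set q : ℝ := p / (p - 1) with hq_def
    refine lt_of_lt_of_le (b := I ^ (1 - p)) (ENNReal.rpow_pos (pos_iff_ne_zero.2 hIne0) hI.ne)
      (le_iInf fun g => le_iInf fun hg => le_iInf fun hadm => ?_)
    set ν := volume.restrict (Icc a b) with hν_def
    set A : ℝ≥0∞ := ∫⁻ x, g x ^ p * fa x ∂ν with hA_def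
    have key := ENNReal.lintegral_mul_le_Lp_mul_Lq ν hpq
      (f := fun x => g x * fa x ^ (1/p)) (g := fun x => fa x ^ (-(1/p)))
      (hg.mul (hfa.pow_const _)).aemeasurable (hfa.pow_const _).aemeasurable
    have hsplit : (fun x => (fun x => g x * fa x ^ (1/p)) x * (fun x => fa x ^ (-(1/p))) x)
        =ᵐ[ν] g := by
      filter_upwards [hfa_fin, hfane] with x hfin hne
      rw [mul_assoc, ← ENNReal.rpow_add _ _ hne hfin.ne, add_neg_cancel, ENNReal.rpow_zero,
        mul_one]
    have hA : (∫⁻ x, ((fun x => g x * fa x ^ (1/p)) x) ^ p ∂ν) = A := by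
      refine lintegral_congr fun x => ?_
      rw [ENNReal.mul_rpow_of_nonneg _ _ hp0.le, ← ENNReal.rpow_mul,
        one_div_mul_cancel hp0.ne', ENNReal.rpow_one]
    have hB : (∫⁻ x, ((fun x => fa x ^ (-(1/p))) x) ^ q ∂ν) = I := by
      refine lintegral_congr fun x => ?_
      rw [← ENNReal.rpow_mul]
      congr 1
      rw [hq_def, he_def]
      field_simp
      ring
    rw [hA, hB] at key
    have h1 : (1:ℝ≥0∞) ≤ A ^ (1/p) * I ^ (1/q) :=
      le_trans hadm (le_trans (le_of_eq (lintegral_congr_ae hsplit.symm)) key)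
    have hIq_ne_top : I ^ (1/q) ≠ ⊤ := ENNReal.rpow_ne_top_of_nonneg hpq.symm.one_div_nonneg hI.ne
    have hIq_ne0 : I ^ (1/q) ≠ 0 := by
      rw [Ne, ENNReal.rpow_eq_zero_iff]
      push_neg
      exact ⟨fun h => absurd h hIne0, fun h => absurd h hI.ne⟩
    have h2 : (I ^ (1/q))⁻¹ ≤ A ^ (1/p) := by
      calc (I ^ (1/q))⁻¹ = 1 * (I ^ (1/q))⁻¹ := (one_mul _).symm
        _ ≤ A ^ (1/p) * I ^ (1/q) * (I ^ (1/q))⁻¹ := mul_le_mul_left h1 _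
        _ = A ^ (1/p) := by rw [mul_assoc, ENNReal.mul_inv_cancel hIq_ne0 hIq_ne_top, mul_one]
    have h3 : I ^ (1 - p) ≤ A := by
      have h4 := ENNReal.rpow_le_rpow h2 hp0.le
      rw [← ENNReal.rpow_mul, one_div_mul_cancel hp0.ne', ENNReal.rpow_one] at h4
      refine le_trans (le_of_eq ?_) h4
      rw [ENNReal.inv_rpow, ← ENNReal.rpow_mul, ← ENNReal.rpow_neg]
      congr 1
      rw [hq_def]
      field_simp
      ring
    refine le_trans h3 ?_
    calc A = ∫⁻ x, (fa * fun x => g x ^ p) x ∂ν := lintegral_congr fun x => mul_comm _ _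
      _ = ∫⁻ x, g x ^ p ∂(ν.withDensity fa) :=
        (lintegral_withDensity_eq_lintegral_mul ν hfa (hg.pow_const p)).symm
      _ = ∫⁻ x in Icc a b, g x ^ p ∂(volume.withDensity fa) := by
        rw [hν_def, ← restrict_withDensity hIccm]
      _ ≤ ∫⁻ x, g x ^ p ∂(volume.withDensity fa) := setLIntegral_le_lintegral _ _
      _ ≤ ∫⁻ x, g x ^ p ∂μ := lintegral_mono' hwd_le le_rfl
end
end

section
/- Let μ be a locally finite Borel measure on ℝ with absolutely continuous part f_a·L¹, let p > 1, and let a < b. Suppose f_a^{1/(1-p)} is Lebesgue integrable on [a,b]. Then for every Borel g : ℝ → [0,∞), ∫_a^b g(x) dx ≤ (∫_a^b g(x)^p f_a(x) dx)^{1/p} · (∫_a^b f_a(x)^{1/(1-p)} dx)^{1/q}, where 1/p + 1/q = 1. Consequently Mod_{p,μ}({γ_{[a,b]}})^{1/p} ≥ (∫_a^b f_a^{1/(1-p)} dx)^{-1/q} > 0. -/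
open MeasureTheory Set
open scoped ENNReal

noncomputable section

/-- the weighted Hölder inequality
`∫_a^b g ≤ (∫_a^b g^p f_a)^{1/p} (∫_a^b f_a^{1/(1-p)})^{1/q}` and the resulting lower
bound `Mod_{p,μ}({γ_{[a,b]}})^{1/p} ≥ (∫_a^b f_a^{1/(1-p)})^{-1/q} > 0`. -/
theorem stmt_8 (μ : Measure ℝ) [IsLocallyFiniteMeasure μ]
    (fa : ℝ → ℝ≥0∞) (hfa : Measurable fa) (μs : Measure ℝ)
    (hsing : μs ⟂ₘ volume) (hdecomp : μ = volume.withDensity fa + μs)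
    (p q : ℝ) (hp : 1 < p) (hq : 1 / p + 1 / q = 1) (a b : ℝ) (hab : a < b)
    (hint : (∫⁻ x in Set.Icc a b, fa x ^ (1 / (1 - p))) < ⊤) :
    (∀ g : ℝ → ℝ≥0∞, Measurable g →
      (∫⁻ x in Set.Icc a b, g x) ≤
        (∫⁻ x in Set.Icc a b, g x ^ p * fa x) ^ (1 / p) *
          (∫⁻ x in Set.Icc a b, fa x ^ (1 / (1 - p))) ^ (1 / q)) ∧
    (∫⁻ x in Set.Icc a b, fa x ^ (1 / (1 - p))) ^ (-(1 / q)) ≤ ModSingle μ p a b ^ (1 / p) ∧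
    0 < ModSingle μ p a b := by
  have hp0 : (0:ℝ) < p := lt_trans one_pos hp
  have hpq : p.HolderConjugate q := by
    refine Real.holderConjugate_iff.mpr ⟨?_, ?_⟩
    · exact hp
    · simpa [one_div] using hq
  have hq0 : (0:ℝ) < q := hpq.symm.pos
  have hneg : 1 / (1 - p) < 0 := div_neg_of_pos_of_neg one_pos (by linarith)
  have hexp : -(1/p) * q = 1/(1-p) := by
    have h1p : (1:ℝ) - p ≠ 0 := by intro h; linarith [hp]
    have hqp : q * (p - 1) = p := by
      field_simp at hq
      nlinarith [hq]
    field_simp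
    nlinarith [hqp]
  set I := (∫⁻ x in Set.Icc a b, fa x ^ (1 / (1 - p))) with hI
  have hI_ne_top : I ≠ ⊤ := hint.ne
  -- a.e. finiteness of fa on [a,b]
  have hfin : ∀ᵐ x ∂(volume.restrict (Set.Icc a b)), fa x < ⊤ := by
    apply ae_lt_top hfa
    have h1 : (volume.withDensity fa) (Set.Icc a b) ≤ μ (Set.Icc a b) := by
      rw [hdecomp]; exact Measure.le_iff'.mp (Measure.le_add_right le_rfl) _
    have h2 : μ (Set.Icc a b) < ⊤ := isCompact_Icc.measure_lt_top
    rw [withDensity_apply _ measurableSet_Icc] at h1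
    exact (h1.trans_lt h2).ne
  -- a.e. nonvanishing of fa on [a,b]
  have hne0 : ∀ᵐ x ∂(volume.restrict (Set.Icc a b)), fa x ≠ 0 := by
    have := ae_lt_top (hfa.pow_const (1/(1-p))) hint.ne
    filter_upwards [this] with x hx h0
    rw [h0, ENNReal.zero_rpow_of_neg hneg] at hx
    exact (lt_irrefl _ hx)
  -- the weighted Hölder inequality
  have holder : ∀ g : ℝ → ℝ≥0∞, Measurable g →
      (∫⁻ x in Set.Icc a b, g x) ≤
        (∫⁻ x in Set.Icc a b, g x ^ p * fa x) ^ (1 / p) * I ^ (1 / q) := by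
    intro g hg
    have key : ∀ᵐ x ∂(volume.restrict (Set.Icc a b)),
        g x = (g x * fa x ^ (1/p)) * fa x ^ (-(1/p)) := by
      filter_upwards [hfin, hne0] with x hxt hx0
      have : fa x ^ (1/p) * fa x ^ (-(1/p)) = 1 := by
        rw [← ENNReal.rpow_add _ _ hx0 hxt.ne]
        norm_num
      rw [mul_assoc, this, mul_one]
    have h2 : (∫⁻ x in Set.Icc a b, (g x * fa x ^ (1/p)) ^ p)
        = ∫⁻ x in Set.Icc a b, g x ^ p * fa x := by
      apply lintegral_congr; intro x
      rw [ENNReal.mul_rpow_of_nonneg _ _ hp0.le, ← ENNReal.rpow_mul,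
        one_div_mul_cancel hp0.ne', ENNReal.rpow_one]
    have h3 : (∫⁻ x in Set.Icc a b, (fa x ^ (-(1/p))) ^ q) = I := by
      apply lintegral_congr; intro x
      rw [← ENNReal.rpow_mul, hexp]
    calc (∫⁻ x in Set.Icc a b, g x)
        = ∫⁻ x in Set.Icc a b, (g x * fa x ^ (1/p)) * fa x ^ (-(1/p)) :=
          lintegral_congr_ae key
      _ ≤ (∫⁻ x in Set.Icc a b, (g x * fa x ^ (1/p)) ^ p) ^ (1/p) *
          (∫⁻ x in Set.Icc a b, (fa x ^ (-(1/p))) ^ q) ^ (1/q) :=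
          ENNReal.lintegral_mul_le_Lp_mul_Lq _ hpq
            ((hg.mul (hfa.pow_const _)).aemeasurable) ((hfa.pow_const _).aemeasurable)
      _ = (∫⁻ x in Set.Icc a b, g x ^ p * fa x) ^ (1/p) * I ^ (1/q) := by rw [h2, h3]
  -- positivity of I
  have hν : (volume.restrict (Set.Icc a b)) ≠ 0 := by
    intro h
    have h0 : volume (Set.Icc a b) = 0 := by
      rw [← Measure.restrict_apply_univ, h]; simp
    rw [Real.volume_Icc] at h0
    rw [ENNReal.ofReal_eq_zero] at h0
    linarith
  have hI_ne0 : I ≠ 0 := by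
    intro h0
    have hzero : (fun x => fa x ^ (1/(1-p))) =ᵐ[volume.restrict (Set.Icc a b)] 0 :=
      (lintegral_eq_zero_iff (hfa.pow_const _)).mp h0
    have : ∀ᵐ x ∂(volume.restrict (Set.Icc a b)), False := by
      filter_upwards [hzero, hfin] with x hx hxt
      rcases ENNReal.rpow_eq_zero_iff.mp hx with ⟨_, h⟩ | ⟨h, _⟩
      · linarith
      · exact hxt.ne h
    haveI hBot : (ae (volume.restrict (Set.Icc a b))).NeBot := ae_neBot.mpr hν
    obtain ⟨x, hx⟩ := this.exists
    exact hx
  -- the modulus bound for each admissible g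
  have key2 : ∀ g : ℝ → ℝ≥0∞, Measurable g → 1 ≤ (∫⁻ x in Set.Icc a b, g x) →
      I ^ (-(1/q)) ≤ (∫⁻ x, g x ^ p ∂μ) ^ (1/p) := by
    intro g hg hg1
    have hA : (∫⁻ x in Set.Icc a b, g x ^ p * fa x) ≤ ∫⁻ x, g x ^ p ∂μ := by
      have e1 : (∫⁻ x in Set.Icc a b, g x ^ p * fa x)
          = ∫⁻ x in Set.Icc a b, g x ^ p ∂(volume.withDensity fa) := by
        rw [restrict_withDensity measurableSet_Icc,
          lintegral_withDensity_eq_lintegral_mul _ hfa (hg.pow_const p)]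
        apply lintegral_congr; intro x
        simp [mul_comm]
      rw [e1]
      calc (∫⁻ x in Set.Icc a b, g x ^ p ∂(volume.withDensity fa))
          ≤ ∫⁻ x, g x ^ p ∂(volume.withDensity fa) :=
            lintegral_mono' Measure.restrict_le_self le_rfl
        _ ≤ ∫⁻ x, g x ^ p ∂μ := by
            apply lintegral_mono'
            · rw [hdecomp]; exact Measure.le_add_right le_rfl
            · exact le_rfl
    have h1 : 1 ≤ (∫⁻ x in Set.Icc a b, g x ^ p * fa x) ^ (1/p) * I ^ (1/q) :=
      hg1.trans (holder g hg)
    have hIq_ne0 : I ^ (1/q) ≠ 0 := by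
      simp [ENNReal.rpow_eq_zero_iff, hI_ne0, hI_ne_top, not_lt.mpr (by positivity : (0:ℝ) ≤ 1/q)]
    have hIq_netop : I ^ (1/q) ≠ ⊤ :=
      ENNReal.rpow_ne_top_of_nonneg (by positivity) hI_ne_top
    have step : I ^ (-(1/q)) ≤ (∫⁻ x in Set.Icc a b, g x ^ p * fa x) ^ (1/p) := by
      rw [ENNReal.rpow_neg, ← one_div,
        ENNReal.div_le_iff_le_mul (Or.inl hIq_ne0) (Or.inl hIq_netop)]
      exact h1
    exact step.trans (ENNReal.rpow_le_rpow hA (by positivity))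
  have hMp : (I ^ (-(1/q))) ^ p ≤ ModSingle μ p a b := by
    refine le_iInf fun g => le_iInf fun hg => le_iInf fun hg1 => ?_
    calc (I ^ (-(1/q))) ^ p
        ≤ ((∫⁻ x, g x ^ p ∂μ) ^ (1/p)) ^ p := ENNReal.rpow_le_rpow (key2 g hg hg1) hp0.le
      _ = ∫⁻ x, g x ^ p ∂μ := by
          rw [← ENNReal.rpow_mul, one_div_mul_cancel hp0.ne', ENNReal.rpow_one]
  have part2 : I ^ (-(1/q)) ≤ ModSingle μ p a b ^ (1/p) := by
    have h := ENNReal.rpow_le_rpow hMp (by positivity : (0:ℝ) ≤ 1/p)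
    rwa [← ENNReal.rpow_mul, mul_one_div, div_self hp0.ne', ENNReal.rpow_one] at h
  refine ⟨holder, part2, ?_⟩
  rw [pos_iff_ne_zero]
  intro h0
  rw [h0, ENNReal.zero_rpow_of_pos (by positivity)] at part2
  have hz : I ^ (-(1/q)) = 0 := le_antisymm part2 zero_le
  rcases ENNReal.rpow_eq_zero_iff.mp hz with ⟨_, h⟩ | ⟨h, _⟩
  · have hlt : -(1/q) < 0 := by
      have : 0 < 1/q := by positivity
      linarith
    linarith
  · exact hI_ne_top h
end
end

section
/- Let μ be a locally finite Borel measure on ℝ with Lebesgue decomposition μ = f_a·L¹ + μ_s, where μ_s is concentrated on a Lebesgue-null set N. Let p > 1 and a < b, and suppose f_a^{1/(1-p)} is NOT Lebesgue integrable on [a,b]. Then Mod_{p,μ}({γ_{[a,b]}}) = 0. -/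
open MeasureTheory Set
open scoped ENNReal

open Filter
open scoped Topology

noncomputable section

lemma ModSingle_le (μ : Measure ℝ) (p a b : ℝ) (g : ℝ → ℝ≥0∞)
    (hg : Measurable g) (hadm : 1 ≤ ∫⁻ x in Set.Icc a b, g x) :
    ModSingle μ p a b ≤ ∫⁻ x, g x ^ p ∂μ :=
  iInf_le_of_le g (iInf_le_of_le hg (iInf_le _ hadm))

/-- if `f_a^{1/(1-p)}` is not Lebesgue integrable on `[a,b]` then
`Mod_{p,μ}({γ_{[a,b]}}) = 0`. -/
theorem stmt_9 (μ : Measure ℝ) [IsLocallyFiniteMeasure μ]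
    (fa : ℝ → ℝ≥0∞) (hfa : Measurable fa) (μs : Measure ℝ) (N : Set ℝ)
    (hN : MeasurableSet N) (hNnull : volume N = 0) (hconc : μs Nᶜ = 0)
    (hsing : μs ⟂ₘ volume) (hdecomp : μ = volume.withDensity fa + μs)
    (p : ℝ) (hp : 1 < p) (a b : ℝ) (hab : a < b)
    (hnotint : (∫⁻ x in Set.Icc a b, fa x ^ (1 / (1 - p))) = ⊤) :
    ModSingle μ p a b = 0 := by
  have hip : (0:ℝ) < p := by linarith
  set c : ℝ := 1 / (1 - p) with hc_def
  have h1p : (1:ℝ) - p ≠ 0 := by linarith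
  have hc : c < 0 := div_neg_of_pos_of_neg one_pos (by linarith)
  have hcp : c * p + 1 = c := by rw [hc_def]; field_simp; ring
  have hcpneg : c * p < 0 := mul_neg_of_neg_of_pos hc hip
  have hfac : Measurable fun y => fa y ^ c :=
    (ENNReal.continuous_rpow_const.measurable).comp hfa
  -- pointwise identity
  have hpt : ∀ y : ℝ≥0∞, y ≠ 0 → y * (y ^ c) ^ p = y ^ c := by
    intro y hy
    rw [← ENNReal.rpow_mul]
    rcases eq_or_ne y ⊤ with rfl | hytop
    · rw [ENNReal.top_rpow_of_neg hcpneg, ENNReal.top_rpow_of_neg hc, mul_zero]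
    · calc y * y ^ (c * p) = y ^ (1:ℝ) * y ^ (c * p) := by rw [ENNReal.rpow_one]
        _ = y ^ (1 + c * p) := (ENNReal.rpow_add _ _ hy hytop).symm
        _ = y ^ c := by rw [add_comm, hcp]
  -- antitone in the base for negative exponent
  have hanti : ∀ x y : ℝ≥0∞, x ≤ y → y ^ c ≤ x ^ c := by
    intro x y hxy
    rw [show c = -(-c) by ring, ENNReal.rpow_neg y, ENNReal.rpow_neg x]
    exact ENNReal.inv_le_inv.2 (ENNReal.rpow_le_rpow hxy (by linarith))
  -- the key bound
  have key : ∀ S : Set ℝ, MeasurableSet S → S ⊆ Icc a b → (∀ x ∈ S, fa x ≠ 0) →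
      (∫⁻ x in S, fa x ^ c) ≠ 0 → (∫⁻ x in S, fa x ^ c) ≠ ⊤ →
      ModSingle μ p a b ≤ (∫⁻ x in S, fa x ^ c) ^ (1 - p) := by
    intro S hS hSsub hSpos hI0 hItop
    set I := ∫⁻ x in S, fa x ^ c with hI
    set A := S \ N with hA
    have hAmeas : MeasurableSet A := hS.diff hN
    have hAsubS : A ⊆ S := diff_subset
    have hIA : ∫⁻ x in A, fa x ^ c = I := by
      rw [hI]
      exact setLIntegral_congr
        (diff_ae_eq_self.2 (measure_mono_null inter_subset_right hNnull))
    set g : ℝ → ℝ≥0∞ := fun x => A.indicator (fun y => fa y ^ c) x * I⁻¹ with hg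
    have hgmeas : Measurable g := (hfac.indicator hAmeas).mul_const _
    have hadm : 1 ≤ ∫⁻ x in Icc a b, g x := by
      have hle : ∫⁻ x in A, g x ≤ ∫⁻ x in Icc a b, g x :=
        lintegral_mono' (Measure.restrict_mono (hAsubS.trans hSsub) le_rfl) le_rfl
      refine le_trans (le_of_eq ?_) hle
      have heq : ∫⁻ x in A, g x = ∫⁻ x in A, fa x ^ c * I⁻¹ := by
        refine setLIntegral_congr_fun hAmeas (fun x hx => ?_)
        simp [hg, indicator_of_mem hx]
      rw [heq, lintegral_mul_const _ hfac, hIA, ENNReal.mul_inv_cancel hI0 hItop]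
    have hgp : ∀ x, g x ^ p = A.indicator (fun y => (fa y ^ c) ^ p * I⁻¹ ^ p) x := by
      intro x
      by_cases hx : x ∈ A
      · simp [hg, indicator_of_mem hx, ENNReal.mul_rpow_of_nonneg _ _ hip.le]
      · simp [hg, indicator_of_notMem hx, ENNReal.zero_rpow_of_pos hip]
    have hgpmeas : Measurable fun x => g x ^ p :=
      (ENNReal.continuous_rpow_const.measurable).comp hgmeas
    calc ModSingle μ p a b ≤ ∫⁻ x, g x ^ p ∂μ := ModSingle_le μ p a b g hgmeas hadm
      _ = (∫⁻ x, g x ^ p ∂(volume.withDensity fa)) + ∫⁻ x, g x ^ p ∂μs := by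
          rw [hdecomp, lintegral_add_measure]
      _ ≤ I ^ (1 - p) + 0 := by
          gcongr
          · -- withDensity part
            rw [lintegral_withDensity_eq_lintegral_mul volume hfa hgpmeas]
            have heq : ∀ x, (fa * fun x => g x ^ p) x
                = A.indicator (fun y => fa y ^ c * I⁻¹ ^ p) x := by
              intro x
              simp only [Pi.mul_apply, hgp x]
              by_cases hx : x ∈ A
              · simp only [indicator_of_mem hx, ← mul_assoc]
                rw [hpt _ (hSpos x (hAsubS hx))]
              · simp [indicator_of_notMem hx]
            simp only [heq]
            rw [lintegral_indicator hAmeas,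
              lintegral_mul_const _ hfac, hIA]
            have : I * I⁻¹ ^ p = I ^ (1:ℝ) * I ^ (-p) := by
              rw [ENNReal.rpow_one, ENNReal.inv_rpow, ← ENNReal.rpow_neg]
            rw [this, ← ENNReal.rpow_add _ _ hI0 hItop, sub_eq_add_neg]
          · -- singular part
            simp only [hgp]
            rw [lintegral_indicator hAmeas]
            refine le_of_eq (setLIntegral_measure_zero _ _ ?_)
            refine measure_mono_null ?_ hconc
            exact fun x hx => hx.2
      _ = I ^ (1 - p) := add_zero _
  -- main case split
  by_cases h0 : volume (Icc a b ∩ {x | fa x = 0}) = 0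
  · -- density a.e. positive on the interval
    set S : ℕ → Set ℝ := fun n => Icc a b ∩ {x | ((n:ℝ≥0∞) + 1)⁻¹ ≤ fa x} with hSdef
    have hSmeas : ∀ n, MeasurableSet (S n) := fun n =>
      measurableSet_Icc.inter (hfa measurableSet_Ici)
    have hSsub : ∀ n, S n ⊆ Icc a b := fun n => inter_subset_left
    have hSpos : ∀ n, ∀ x ∈ S n, fa x ≠ 0 := by
      intro n x hx h
      have h2 : ((n:ℝ≥0∞) + 1)⁻¹ ≤ fa x := hx.2
      rw [h, le_zero_iff] at h2
      exact ENNReal.inv_ne_zero.2 (by simp) h2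
    have hSmono : Monotone S := by
      intro m n hmn x hx
      have h2 : ((m:ℝ≥0∞) + 1)⁻¹ ≤ fa x := hx.2
      refine ⟨hx.1, ?_⟩
      show ((n:ℝ≥0∞) + 1)⁻¹ ≤ fa x
      exact le_trans (ENNReal.inv_le_inv.2 (by gcongr)) h2
    set I : ℕ → ℝ≥0∞ := fun n => ∫⁻ x in S n, fa x ^ c with hIdef
    have hItop : ∀ n, I n ≠ ⊤ := by
      intro n
      have hb : I n ≤ (((n:ℝ≥0∞) + 1)⁻¹) ^ c * volume (S n) := by
        rw [← setLIntegral_const]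
        exact setLIntegral_mono measurable_const fun x hx => hanti _ _ hx.2
      refine ne_top_of_le_ne_top ?_ hb
      refine ENNReal.mul_ne_top ?_ ?_
      · intro h
        rcases ENNReal.rpow_eq_top_iff.1 h with ⟨h1, _⟩ | ⟨h1, h2⟩
        · exact ENNReal.inv_ne_zero.2 (by simp) h1
        · linarith
      · have : volume (S n) ≤ volume (Icc a b) := measure_mono (hSsub n)
        rw [Real.volume_Icc] at this
        exact ne_top_of_le_ne_top ENNReal.ofReal_ne_top this
    have hImono : Monotone I := fun m n hmn =>
      lintegral_mono' (Measure.restrict_mono (hSmono hmn) le_rfl) le_rfl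
    have hIsup : ⨆ n, I n = ⊤ := by
      have hind : ∀ n, I n = ∫⁻ x, (S n).indicator (fun y => fa y ^ c) x := by
        intro n; rw [lintegral_indicator (hSmeas n)]
      have hmonoF : Monotone fun n => (S n).indicator (fun y => fa y ^ c) := by
        intro m n hmn x
        exact indicator_le_indicator_of_subset (hSmono hmn) (fun _ => zero_le) x
      have hsupeq : (⨆ n, I n) = ∫⁻ x, ⨆ n, (S n).indicator (fun y => fa y ^ c) x := by
        simp only [hind]
        exact (lintegral_iSup (fun n => hfac.indicator (hSmeas n)) hmonoF).symm
      rw [hsupeq]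
      have hptw : ∀ x, (⨆ n, (S n).indicator (fun y => fa y ^ c) x)
          = (Icc a b ∩ {x | fa x ≠ 0}).indicator (fun y => fa y ^ c) x := by
        intro x
        by_cases hx : x ∈ Icc a b ∩ {x | fa x ≠ 0}
        · rw [indicator_of_mem hx]
          refine le_antisymm (iSup_le fun n => indicator_le_self _ _ x) ?_
          obtain ⟨n, hn⟩ := ENNReal.exists_inv_nat_lt hx.2
          have hxS : x ∈ S (n) := by
            refine ⟨hx.1, le_trans ?_ hn.le⟩
            exact ENNReal.inv_le_inv.2 (by simp)
          calc fa x ^ c = (S n).indicator (fun y => fa y ^ c) x := by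
                rw [indicator_of_mem hxS]
            _ ≤ ⨆ m, (S m).indicator (fun y => fa y ^ c) x := le_iSup (fun m => (S m).indicator (fun y => fa y ^ c) x) n
        · rw [indicator_of_notMem hx]
          refine le_antisymm (iSup_le fun n => ?_) zero_le
          rw [indicator_of_notMem]
          intro hxS
          exact hx ⟨hxS.1, hSpos n x hxS⟩
      simp only [hptw]
      have hne : MeasurableSet {x : ℝ | fa x ≠ 0} := (hfa (measurableSet_singleton 0)).compl
      rw [lintegral_indicator (measurableSet_Icc.inter hne)]
      rw [← hnotint]
      refine setLIntegral_congr ?_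
      rw [Filter.eventuallyEq_set]
      have hnull : volume (Icc a b \ (Icc a b ∩ {x | fa x ≠ 0})) = 0 := by
        refine measure_mono_null ?_ h0
        intro x hx
        refine ⟨hx.1, ?_⟩
        by_contra h
        exact hx.2 ⟨hx.1, h⟩
      have : ∀ᵐ x ∂volume, x ∉ Icc a b \ (Icc a b ∩ {x | fa x ≠ 0}) :=
        (measure_eq_zero_iff_ae_notMem (μ := volume)).1 hnull
      filter_upwards [this] with x hx
      constructor
      · exact fun h => h.1
      · intro h
        by_contra h2
        exact hx ⟨h, h2⟩
    have hbound : ∀ n, ModSingle μ p a b ≤ I n ^ (1 - p) := by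
      intro n
      rcases eq_or_ne (I n) 0 with h | h
      · rw [h, ENNReal.zero_rpow_of_neg (by linarith)]; exact le_top
      · exact key (S n) (hSmeas n) (hSsub n) (hSpos n) h (hItop n)
    have htendsto : Tendsto (fun n => I n ^ (1 - p)) atTop (𝓝 0) := by
      have h1 : Tendsto I atTop (𝓝 ⊤) := by
        rw [← hIsup]; exact tendsto_atTop_iSup hImono
      have h2 := (ENNReal.continuous_rpow_const (y := 1 - p)).tendsto ⊤
      have := h2.comp h1
      rwa [ENNReal.top_rpow_of_neg (by linarith)] at this
    exact le_antisymm (ge_of_tendsto' htendsto hbound) zero_le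
  · -- the density vanishes on a set of positive measure: take the indicator test function
    set T : Set ℝ := (Icc a b ∩ {x | fa x = 0}) \ N with hTdef
    have hTmeas : MeasurableSet T :=
      (measurableSet_Icc.inter (hfa (measurableSet_singleton 0))).diff hN
    have hTvol : volume T = volume (Icc a b ∩ {x | fa x = 0}) := measure_diff_null hNnull
    have hT0 : volume T ≠ 0 := by rw [hTvol]; exact h0
    have hTfin : volume T ≠ ⊤ := by
      have : volume T ≤ volume (Icc a b) := measure_mono (diff_subset.trans inter_subset_left)
      rw [Real.volume_Icc] at this
      exact ne_top_of_le_ne_top ENNReal.ofReal_ne_top this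
    set g : ℝ → ℝ≥0∞ := T.indicator fun _ => (volume T)⁻¹ with hg
    have hgmeas : Measurable g := measurable_const.indicator hTmeas
    have hadm : 1 ≤ ∫⁻ x in Icc a b, g x := by
      have hle : ∫⁻ x in T, g x ≤ ∫⁻ x in Icc a b, g x :=
        lintegral_mono' (Measure.restrict_mono (diff_subset.trans inter_subset_left) le_rfl) le_rfl
      refine le_trans (le_of_eq ?_) hle
      have heq : ∫⁻ x in T, g x = ∫⁻ x in T, (volume T)⁻¹ := by
        refine setLIntegral_congr_fun hTmeas (fun x hx => ?_)
        simp [hg, indicator_of_mem hx]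
      rw [heq, setLIntegral_const, ENNReal.inv_mul_cancel hT0 hTfin]
    have hgp : ∀ x, g x ^ p = T.indicator (fun _ => (volume T)⁻¹ ^ p) x := by
      intro x
      by_cases hx : x ∈ T
      · simp [hg, indicator_of_mem hx]
      · simp [hg, indicator_of_notMem hx, ENNReal.zero_rpow_of_pos hip]
    have hgpmeas : Measurable fun x => g x ^ p :=
      (ENNReal.continuous_rpow_const.measurable).comp hgmeas
    have hle : ModSingle μ p a b ≤ 0 := by
      calc ModSingle μ p a b ≤ ∫⁻ x, g x ^ p ∂μ := ModSingle_le μ p a b g hgmeas hadm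
        _ = (∫⁻ x, g x ^ p ∂(volume.withDensity fa)) + ∫⁻ x, g x ^ p ∂μs := by
            rw [hdecomp, lintegral_add_measure]
        _ ≤ 0 + 0 := by
            gcongr
            · rw [lintegral_withDensity_eq_lintegral_mul volume hfa hgpmeas]
              refine le_of_eq ?_
              have heq : ∀ x, (fa * fun x => g x ^ p) x = 0 := by
                intro x
                simp only [Pi.mul_apply, hgp x]
                by_cases hx : x ∈ T
                · rw [indicator_of_mem hx, hx.1.2, zero_mul]
                · rw [indicator_of_notMem hx, mul_zero]
              simp only [heq]
              exact lintegral_zero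
            · simp only [hgp]
              rw [lintegral_indicator hTmeas]
              refine le_of_eq (setLIntegral_measure_zero _ _ ?_)
              exact measure_mono_null (fun x hx => hx.2) hconc
        _ = 0 := add_zero _
    exact le_antisymm hle zero_le
end
end

section
/- Let μ be a locally finite Borel measure on ℝ with absolutely continuous part f_a·L¹, p > 1, N_p as before, and f : ℝ → ℝ Lipschitz. If g : ℝ → [0,∞) is a bounded Borel p-upper gradient of f with respect to μ, then g(x) ≥ |f'(x)| for L¹-almost every x ∈ N_p. -/
open MeasureTheory Set
open scoped ENNReal
open Filter Metric
open scoped Topology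

noncomputable section

/-- An absolutely continuous curve in a metric space, together with its metric speed. -/
structure ACCurve (X : Type*) [MetricSpace X] where
  a : ℝ
  b : ℝ
  hab : a ≤ b
  toFun : ℝ → X
  cont : ContinuousOn toFun (Set.Icc a b)
  speed : ℝ → ℝ
  speed_nonneg : ∀ t, 0 ≤ speed t
  speed_integrable : IntegrableOn speed (Set.Icc a b)
  dist_le : ∀ s t, a ≤ s → s ≤ t → t ≤ b →
    dist (toFun s) (toFun t) ≤ ∫ u in s..t, speed u
  speed_min : ∀ g : ℝ → ℝ, IntegrableOn g (Set.Icc a b) →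
    (∀ s t, a ≤ s → s ≤ t → t ≤ b → dist (toFun s) (toFun t) ≤ ∫ u in s..t, g u) →
    ∀ᵐ t ∂(volume.restrict (Set.Icc a b)), speed t ≤ g t

/-- The curve integral `∫_γ g` of a nonnegative Borel function. -/
def acCurveIntegral {X : Type*} [MetricSpace X] (γ : ACCurve X) (g : X → ℝ≥0∞) : ℝ≥0∞ :=
  ∫⁻ t in Set.Icc γ.a γ.b, g (γ.toFun t) * ENNReal.ofReal (γ.speed t)

/-- The `p`-modulus of a family of absolutely continuous curves. -/
def pModulus {X : Type*} [MetricSpace X] [MeasurableSpace X] (m : Measure X) (p : ℝ)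
    (Γ : Set (ACCurve X)) : ℝ≥0∞ :=
  ⨅ (g : X → ℝ≥0∞) (_ : Measurable g) (_ : ∀ γ ∈ Γ, 1 ≤ acCurveIntegral γ g),
    ∫⁻ x, g x ^ p ∂m

/-- `g` is a `p`-upper gradient of `f`: the upper gradient inequality holds along
`p`-a.e. curve. -/
def IsPUpperGradient {X : Type*} [MetricSpace X] [MeasurableSpace X] (m : Measure X) (p : ℝ)
    (f : X → ℝ) (g : X → ℝ≥0∞) : Prop :=
  Measurable g ∧
    pModulus m p {γ : ACCurve X |
      ¬ ENNReal.ofReal |f (γ.toFun γ.b) - f (γ.toFun γ.a)| ≤ acCurveIntegral γ g} = 0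

lemma lebesgue_pt {h : ℝ → ℝ} (hh : LocallyIntegrable h volume) :
    ∀ᵐ x ∂(volume : Measure ℝ),
      Tendsto (fun δ : ℝ => ⨍ y in closedBall x δ, h y) (𝓝[>] 0) (𝓝 (h x)) := by
  filter_upwards [IsUnifLocDoublingMeasure.ae_tendsto_average (μ := (volume : Measure ℝ)) hh 1]
    with x hx
  refine hx (fun _ => x) id tendsto_id ?_
  filter_upwards [self_mem_nhdsWithin] with δ (hδ : (0:ℝ) < δ)
  rw [one_mul]
  exact mem_closedBall_self hδ.le

lemma avg_closedBall {h : ℝ → ℝ} {t δ : ℝ} (hδ : 0 < δ) :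
    ⨍ y in closedBall t δ, h y = (2*δ)⁻¹ * ∫ y in Icc (t-δ) (t+δ), h y := by
  rw [setAverage_eq, Real.closedBall_eq_Icc, Real.volume_real_Icc_of_le (by linarith), smul_eq_mul]
  ring_nf

lemma ae_one_le {a b : ℝ} (hab : a ≤ b) {h : ℝ → ℝ} (hint : IntegrableOn h (Icc a b))
    (hle : ∀ s t, a ≤ s → s ≤ t → t ≤ b → t - s ≤ ∫ u in s..t, h u) :
    ∀ᵐ t ∂(volume.restrict (Icc a b)), 1 ≤ h t := by
  set h' : ℝ → ℝ := (Icc a b).indicator h with hh'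
  have hint' : Integrable h' volume := (integrable_indicator_iff measurableSet_Icc).2 hint
  have key := lebesgue_pt hint'.locallyIntegrable
  rw [ae_restrict_iff' measurableSet_Icc]
  have hab' : ∀ᵐ t ∂(volume : Measure ℝ), t ≠ a ∧ t ≠ b := by
    have : (volume : Measure ℝ) {t | ¬ (t ≠ a ∧ t ≠ b)} = 0 := by
      have : {t : ℝ | ¬ (t ≠ a ∧ t ≠ b)} ⊆ {a, b} := by
        intro t ht; simp only [mem_setOf_eq, not_and_or, not_not] at ht
        rcases ht with h1 | h1 <;> simp [h1]
      refine measure_mono_null this ?_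
      refine measure_union_null (measure_singleton a) (measure_singleton b)
    exact this
  filter_upwards [key, hab'] with t ht ⟨hta, htb⟩ htmem
  have htIoo : t ∈ Ioo a b := ⟨htmem.1.lt_of_ne (Ne.symm hta), htmem.2.lt_of_ne htb⟩
  have h't : h' t = h t := indicator_of_mem htmem h
  set m := min (t - a) (b - t) with hm
  have hmpos : 0 < m := lt_min (by linarith [htIoo.1]) (by linarith [htIoo.2])
  have hev : ∀ᶠ δ in 𝓝[>] (0:ℝ), 1 ≤ ⨍ y in closedBall t δ, h' y := by
    have hmem : Ioc (0:ℝ) m ∈ 𝓝[>] (0:ℝ) := Ioc_mem_nhdsGT_of_mem ⟨le_refl 0, hmpos⟩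
    filter_upwards [hmem] with δ ⟨hδ0, hδm⟩
    have hsub : Icc (t-δ) (t+δ) ⊆ Icc a b := by
      apply Icc_subset_Icc
      · have := le_trans hδm (min_le_left _ _); linarith
      · have := le_trans hδm (min_le_right _ _); linarith
    have hInt : ∫ y in Icc (t-δ) (t+δ), h' y = ∫ y in Icc (t-δ) (t+δ), h y := by
      rw [setIntegral_indicator measurableSet_Icc, inter_eq_left.2 hsub]
    have hlow : 2*δ ≤ ∫ y in Icc (t-δ) (t+δ), h y := by
      have := hle (t-δ) (t+δ) (by have := le_trans hδm (min_le_left _ _); linarith)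
        (by linarith) (by have := le_trans hδm (min_le_right _ _); linarith)
      rw [intervalIntegral.integral_of_le (by linarith), ← integral_Icc_eq_integral_Ioc] at this
      linarith
    rw [avg_closedBall hδ0, hInt]
    rw [← div_eq_inv_mul, le_div_iff₀ (by linarith)]
    linarith
  have := ge_of_tendsto ht hev
  rwa [h't] at this

def segCurve (a b : ℝ) (hab : a ≤ b) : ACCurve ℝ where
  a := a
  b := b
  hab := hab
  toFun := id
  cont := continuousOn_id
  speed := fun _ => 1
  speed_nonneg := fun _ => zero_le_one
  speed_integrable := integrableOn_const measure_Icc_lt_top.ne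
  dist_le := fun s t _ hst _ => by
    rw [id, id, Real.dist_eq, abs_sub_comm, abs_of_nonneg (sub_nonneg.2 hst)]
    simp
  speed_min := fun g hg hle => ae_one_le hab hg fun s t hs hst ht => by
    have h2 := hle s t hs hst ht
    rwa [id, id, Real.dist_eq, abs_sub_comm, abs_of_nonneg (sub_nonneg.2 hst)] at h2

lemma curveIntegral_seg {a b : ℝ} (hab : a ≤ b) (ρ : ℝ → ℝ≥0∞) :
    acCurveIntegral (segCurve a b hab) ρ = ∫⁻ t in Icc a b, ρ t := by
  simp [acCurveIntegral, segCurve]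

lemma seg_not_bad (μ : Measure ℝ) [IsLocallyFiniteMeasure μ]
    (fa : ℝ → ℝ≥0∞) (hfa : Measurable fa) (μs : Measure ℝ)
    (hdecomp : μ = volume.withDensity fa + μs)
    (p : ℝ) (hp : 1 < p)
    {x ε : ℝ} (hε : 0 < ε) (hA : (∫⁻ t in Icc (x-ε) (x+ε), fa t ^ (1/(1-p))) < ⊤)
    {δ : ℝ} (hδ : 0 < δ) (hδε : δ ≤ ε)
    {Γ : Set (ACCurve ℝ)} (hΓ : pModulus μ p Γ = 0) :
    segCurve (x-δ) (x+δ) (by linarith) ∉ Γ := by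
  intro hmem
  have hp0 : (0:ℝ) < p := by linarith
  set q : ℝ := Real.conjExponent p with hq
  have hpq : p.HolderConjugate q := Real.HolderConjugate.conjExponent hp
  have hq0 : (0:ℝ) < q := hpq.symm.pos
  have hc : 1/(1-p) < 0 := div_neg_of_pos_of_neg one_pos (by linarith)
  set Iε : Set ℝ := Icc (x-ε) (x+ε) with hIε
  set I : Set ℝ := Icc (x-δ) (x+δ) with hI
  have hsub : I ⊆ Iε := Icc_subset_Icc (by linarith) (by linarith)
  set Aε : ℝ≥0∞ := ∫⁻ t in Iε, fa t ^ (1/(1-p)) with hAe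
  -- fa is a.e. finite on Iε
  have hfin : ∀ᵐ t ∂(volume.restrict Iε), fa t < ⊤ := by
    refine ae_lt_top hfa ?_
    have h1 : (volume.withDensity fa) Iε ≤ μ Iε := by
      rw [hdecomp]; exact le_self_add.trans_eq (Measure.add_apply _ _ _).symm
    rw [withDensity_apply _ measurableSet_Icc] at h1
    exact (h1.trans_lt isCompact_Icc.measure_lt_top).ne
  -- fa is a.e. nonzero on Iε
  have hpos : ∀ᵐ t ∂(volume.restrict Iε), fa t ≠ 0 := by
    filter_upwards [ae_lt_top (hfa.pow_const _) hA.ne] with t ht h0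
    rw [h0, ENNReal.zero_rpow_of_neg hc] at ht
    exact absurd ht (lt_irrefl _)
  -- Aε is positive
  have hA0 : Aε ≠ 0 := by
    intro h0
    have h1 : ∀ᵐ t ∂(volume.restrict Iε), fa t ^ (1/(1-p)) = 0 :=
      (lintegral_eq_zero_iff (hfa.pow_const _)).1 h0
    have h2 : ∀ᵐ (_t : ℝ) ∂(volume.restrict Iε), False := by
      filter_upwards [h1, hfin] with t h1t h2t
      rcases (ENNReal.rpow_eq_zero_iff).1 h1t with ⟨_, h3⟩ | ⟨h3, _⟩
      · linarith
      · rw [h3] at h2t; exact absurd h2t (lt_irrefl _)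
    have h3 : (volume.restrict Iε) univ = 0 := by
      simpa using ae_iff.1 h2
    rw [Measure.restrict_apply_univ, hIε, Real.volume_Icc] at h3
    simp only [ENNReal.ofReal_eq_zero] at h3
    linarith
  -- restrict a.e. facts to I
  have hres : volume.restrict I ≤ volume.restrict Iε := Measure.restrict_mono hsub le_rfl
  have hfinI : ∀ᵐ t ∂(volume.restrict I), fa t < ⊤ := ae_mono hres hfin
  have hposI : ∀ᵐ t ∂(volume.restrict I), fa t ≠ 0 := ae_mono hres hpos
  -- lower bound for the modulus of the singleton
  set E : ℝ≥0∞ := Aε ^ (1/q) with hE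
  have hE0 : E ≠ 0 := by
    rw [hE]
    simp only [ne_eq, ENNReal.rpow_eq_zero_iff, not_or, not_and]
    exact ⟨fun h => absurd h hA0, fun h => absurd h (by exact fun hh => (hA.ne hh).elim)⟩
  have hEt : E ≠ ⊤ := ENNReal.rpow_ne_top_of_nonneg (by positivity) hA.ne
  set c0 : ℝ≥0∞ := (E⁻¹) ^ p with hc0
  have hc0pos : 0 < c0 :=
    ENNReal.rpow_pos (ENNReal.inv_pos.2 hEt) (ENNReal.inv_ne_top.2 hE0)
  set γ := segCurve (x-δ) (x+δ) (by linarith : x - δ ≤ x + δ) with hγ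
  have hlow : c0 ≤ pModulus μ p {γ} := by
    refine le_iInf fun ρ => le_iInf fun hρ => le_iInf fun hadm => ?_
    have h1 : 1 ≤ ∫⁻ t in I, ρ t := by
      have := hadm γ (mem_singleton _)
      rwa [hγ, curveIntegral_seg] at this
    set F : ℝ → ℝ≥0∞ := fun t => ρ t * fa t ^ (1/p) with hF
    set G : ℝ → ℝ≥0∞ := fun t => fa t ^ (-(1/p)) with hG
    have hFG : ∫⁻ t in I, ρ t = ∫⁻ t in I, (F * G) t := by
      refine lintegral_congr_ae ?_
      filter_upwards [hfinI, hposI] with t h1t h2t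
      simp only [hF, hG, Pi.mul_apply]
      rw [mul_assoc, ENNReal.rpow_neg, ENNReal.mul_inv_cancel, mul_one]
      · simp only [ne_eq, ENNReal.rpow_eq_zero_iff, not_or, not_and]
        exact ⟨fun h => absurd h h2t, fun h => absurd h h1t.ne⟩
      · exact ENNReal.rpow_ne_top_of_nonneg (by positivity) h1t.ne
    have holder := ENNReal.lintegral_mul_le_Lp_mul_Lq (volume.restrict I) hpq
      (f := F) (g := G)
      ((hρ.mul (hfa.pow_const (1/p))).aemeasurable) ((hfa.pow_const (-(1/p))).aemeasurable)
    have hFp : ∀ t, F t ^ p = fa t * ρ t ^ p := fun t => by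
      rw [hF, ENNReal.mul_rpow_of_nonneg _ _ hp0.le, ← ENNReal.rpow_mul,
        one_div_mul_cancel hp0.ne', ENNReal.rpow_one, mul_comm]
    have hGq : ∀ t, G t ^ q = fa t ^ (1/(1-p)) := fun t => by
      rw [hG, ← ENNReal.rpow_mul]
      congr 1
      rw [hq, Real.conjExponent]
      have h1 : (1:ℝ) - p ≠ 0 := by intro h; linarith
      have h2 : p - 1 ≠ 0 := by intro h; linarith
      have h3 : p ≠ 0 := by intro h; linarith
      field_simp
      ring
    set B : ℝ≥0∞ := ∫⁻ t in I, fa t * ρ t ^ p with hB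
    have h2 : (1:ℝ≥0∞) ≤ B ^ (1/p) * E := by
      calc (1:ℝ≥0∞) ≤ ∫⁻ t in I, (F * G) t := hFG ▸ h1
        _ ≤ (∫⁻ t in I, F t ^ p) ^ (1/p) * (∫⁻ t in I, G t ^ q) ^ (1/q) := holder
        _ = B ^ (1/p) * (∫⁻ t in I, fa t ^ (1/(1-p))) ^ (1/q) := by
            rw [hB]; congr 1
            · congr 1; exact lintegral_congr fun t => hFp t
            · congr 1; exact lintegral_congr fun t => hGq t
        _ ≤ B ^ (1/p) * E := by
            refine mul_le_mul_right (ENNReal.rpow_le_rpow ?_ (by positivity)) _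
            exact lintegral_mono_set hsub
    have h3 : E⁻¹ ≤ B ^ (1/p) := by
      calc E⁻¹ = 1 * E⁻¹ := (one_mul _).symm
        _ ≤ (B ^ (1/p) * E) * E⁻¹ := mul_le_mul_left h2 _
        _ = B ^ (1/p) := by rw [mul_assoc, ENNReal.mul_inv_cancel hE0 hEt, mul_one]
    have h4 : c0 ≤ B := by
      have := ENNReal.rpow_le_rpow h3 hp0.le
      rwa [← ENNReal.rpow_mul, one_div_mul_cancel hp0.ne', ENNReal.rpow_one] at this
    refine h4.trans ?_
    calc B ≤ ∫⁻ t, fa t * ρ t ^ p := setLIntegral_le_lintegral _ _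
      _ = ∫⁻ t, ρ t ^ p ∂(volume.withDensity fa) :=
          (lintegral_withDensity_eq_lintegral_mul volume hfa (hρ.pow_const p)).symm
      _ ≤ ∫⁻ t, ρ t ^ p ∂μ := by
          rw [hdecomp]; exact lintegral_mono' (Measure.le_add_right le_rfl) le_rfl
  have hmon : pModulus μ p {γ} ≤ pModulus μ p Γ := by
    refine iInf_mono fun ρ => iInf_mono fun hρ => ?_
    exact le_iInf fun hadm => iInf_le _ (fun γ' hγ' => (mem_singleton_iff.1 hγ') ▸ hadm γ hmem)
  rw [hΓ] at hmon
  exact absurd (hlow.trans hmon) (by simpa using hc0pos.ne')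

/-- conversely, a bounded Borel `p`-upper gradient `g` of a Lipschitz
function `f` satisfies `g ≥ |f'|` at `L¹`-a.e. point of `N_p`. -/
theorem stmt_13 (μ : Measure ℝ) [IsLocallyFiniteMeasure μ]
    (fa : ℝ → ℝ≥0∞) (hfa : Measurable fa) (μs : Measure ℝ)
    (hsing : μs ⟂ₘ volume) (hdecomp : μ = volume.withDensity fa + μs)
    (p : ℝ) (hp : 1 < p)
    (Np : Set ℝ)
    (hNp : Np = {x : ℝ | ∃ ε > (0 : ℝ),
      (∫⁻ t in Set.Icc (x - ε) (x + ε), fa t ^ (1 / (1 - p))) < ⊤})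
    (f : ℝ → ℝ) (K : NNReal) (hf : LipschitzWith K f)
    (g : ℝ → ℝ) (hgmeas : Measurable g) (hg0 : ∀ x, 0 ≤ g x)
    (hgbd : ∃ M : ℝ, ∀ x, g x ≤ M)
    (hug : IsPUpperGradient μ p f (fun x => ENNReal.ofReal (g x))) :
    ∀ᵐ x ∂volume, x ∈ Np → |deriv f x| ≤ g x := by
  obtain ⟨M, hM⟩ := hgbd
  obtain ⟨-, hmod⟩ := hug
  have hgI : ∀ a b : ℝ, IntegrableOn g (Icc a b) volume := by
    intro a b
    have : IsFiniteMeasure (volume.restrict (Icc a b)) :=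
      ⟨by rw [Measure.restrict_apply_univ]; exact measure_Icc_lt_top⟩
    exact (integrable_const M).mono' hgmeas.aestronglyMeasurable
      (ae_of_all _ fun t => by rw [Real.norm_eq_abs, abs_of_nonneg (hg0 t)]; exact hM t)
  have hgloc : LocallyIntegrable g volume := fun x =>
    ⟨Icc (x-1) (x+1), Icc_mem_nhds (by linarith) (by linarith), hgI _ _⟩
  have claim : ∀ x ε, 0 < ε →
      (∫⁻ t in Icc (x-ε) (x+ε), fa t ^ (1/(1-p))) < ⊤ →
      ∀ δ, 0 < δ → δ ≤ ε → |f (x+δ) - f (x-δ)| ≤ ∫ u in Icc (x-δ) (x+δ), g u := by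
    intro x ε hε hA δ hδ hδε
    have hnb := seg_not_bad μ fa hfa μs hdecomp p hp hε hA hδ hδε hmod
    simp only [mem_setOf_eq, not_not] at hnb
    rw [curveIntegral_seg] at hnb
    have heq : (∫⁻ t in Icc (x-δ) (x+δ), ENNReal.ofReal (g t))
        = ENNReal.ofReal (∫ t in Icc (x-δ) (x+δ), g t) :=
      (ofReal_integral_eq_lintegral_ofReal (hgI _ _) (ae_of_all _ hg0)).symm
    rw [heq] at hnb
    have h2 := (ENNReal.ofReal_le_ofReal_iff
      (integral_nonneg fun t => hg0 t)).1 hnb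
    simpa [segCurve] using h2
  filter_upwards [lebesgue_pt hgloc, hf.ae_differentiableAt (μ := volume)] with x hx hdx hxNp
  rw [hNp] at hxNp
  obtain ⟨ε, hε, hA⟩ := hxNp
  set d := deriv f x with hd
  have hder : HasDerivAt f d x := hdx.hasDerivAt
  have hslope := hasDerivAt_iff_tendsto_slope.1 hder
  have h1 : Tendsto (fun δ : ℝ => x + δ) (𝓝[>] (0:ℝ)) (𝓝[≠] x) := by
    apply tendsto_nhdsWithin_of_tendsto_nhds_of_eventually_within
    · have : Tendsto (fun δ : ℝ => x + δ) (𝓝 (0:ℝ)) (𝓝 x) := by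
        simpa using (continuous_add_left x).tendsto (0:ℝ)
      exact this.mono_left nhdsWithin_le_nhds
    · filter_upwards [self_mem_nhdsWithin] with δ (hδ : (0:ℝ) < δ)
      simp only [mem_compl_iff, mem_singleton_iff]
      intro h; nlinarith [hδ]
  have h2 : Tendsto (fun δ : ℝ => x - δ) (𝓝[>] (0:ℝ)) (𝓝[≠] x) := by
    apply tendsto_nhdsWithin_of_tendsto_nhds_of_eventually_within
    · have : Tendsto (fun δ : ℝ => x - δ) (𝓝 (0:ℝ)) (𝓝 x) := by
        simpa using (continuous_sub_left x).tendsto (0:ℝ)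
      exact this.mono_left nhdsWithin_le_nhds
    · filter_upwards [self_mem_nhdsWithin] with δ (hδ : (0:ℝ) < δ)
      simp only [mem_compl_iff, mem_singleton_iff]
      intro h; nlinarith [hδ]
  have hplus := hslope.comp h1
  have hminus := hslope.comp h2
  have habs : Tendsto (fun δ : ℝ => |(slope f x (x+δ) + slope f x (x-δ))/2|)
      (𝓝[>] (0:ℝ)) (𝓝 |d|) := by
    have := ((hplus.add hminus).div_const 2).abs
    have heq : |(d + d)/2| = |d| := by congr 1; ring
    rw [heq] at this
    exact this
  have hL : Tendsto (fun δ : ℝ => |f (x+δ) - f (x-δ)| / (2*δ)) (𝓝[>] (0:ℝ)) (𝓝 |d|) := by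
    refine habs.congr' ?_
    filter_upwards [self_mem_nhdsWithin] with δ (hδ : (0:ℝ) < δ)
    have hs : (slope f x (x+δ) + slope f x (x-δ))/2 = (f (x+δ) - f (x-δ)) / (2*δ) := by
      rw [slope_def_field, slope_def_field]
      have h3 : x + δ - x = δ := by ring
      have h4 : x - δ - x = -δ := by ring
      rw [h3, h4, div_neg, ← sub_eq_add_neg, ← sub_div, div_div]
      ring_nf
    rw [hs, abs_div, abs_of_pos (by linarith : (0:ℝ) < 2*δ)]
  have hineq : ∀ᶠ δ in 𝓝[>] (0:ℝ),
      |f (x+δ) - f (x-δ)| / (2*δ) ≤ ⨍ y in closedBall x δ, g y := by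
    filter_upwards [Ioc_mem_nhdsGT_of_mem ⟨le_refl (0:ℝ), hε⟩] with δ hδm
    obtain ⟨hδ0, hδε⟩ := hδm
    rw [avg_closedBall hδ0, div_eq_inv_mul]
    exact mul_le_mul_of_nonneg_left (claim x ε hε hA δ hδ0 hδε)
      (inv_nonneg.2 (by linarith))
  exact le_of_tendsto_of_tendsto hL hx hineq
end
end

section
/- Let α > 0, p > 1 + α, and suppose (w_k)_{k≥1} is a sequence of Borel functions w_k : ℝ → [0,∞) with w_{k+1} ≤ w_k pointwise, w_1 ≡ 1, and such that for some constant C > 0 (depending only on p, α) and all k ≥ 2 and all bounded intervals I: (⨍_I w_k)(⨍_I w_k^{1/(1-p)})^{p-1} ≤ max{ (1+ε_k)^p (⨍_I w_{k-1})(⨍_I w_{k-1}^{1/(1-p)})^{p-1}, C }, where ε_k > 0 satisfy ∏_{k}(1+ε_k) < ∞. Then w = inf_k w_k is a Muckenhoupt A_p-weight on ℝ. -/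
open MeasureTheory Set
open scoped ENNReal

lemma aux_rpow_iSup (f : ℕ → ℝ≥0∞) {y : ℝ} (hy : 0 < y) :
    (⨆ i, f i) ^ y = ⨆ i, f i ^ y :=
  (ENNReal.orderIsoRpow y hy).map_iSup f

lemma aux_rpow_iInf (f : ℕ → ℝ≥0∞) {y : ℝ} (hy : 0 < y) :
    (⨅ i, f i) ^ y = ⨅ i, f i ^ y :=
  (ENNReal.orderIsoRpow y hy).map_iInf f

lemma aux_rpow_iInf_neg (f : ℕ → ℝ≥0∞) {y : ℝ} (hy : y < 0) :
    (⨅ i, f i) ^ y = ⨆ i, f i ^ y := by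
  have h : 0 < -y := by linarith
  have e : ∀ z : ℝ≥0∞, z ^ y = (z ^ (-y))⁻¹ := by
    intro z; rw [← ENNReal.rpow_neg, neg_neg]
  simp_rw [e]
  rw [aux_rpow_iInf f h, ENNReal.inv_iInf]

/-- if each construction step increases the `A_p`-product of the weights
`w_k` at most by a factor `(1+ε_k)^p` (or keeps it below a universal constant `C`),
with `∏(1+ε_k) < ∞`, then the limit weight `w = inf_k w_k` is an `A_p`-weight on `ℝ`.
Here `A v a b` denotes the `A_p`-product of `v` over the interval `[a,b]`
(`ℝ≥0∞`-valued, so that `0^{1/(1-p)} = ∞`). -/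
theorem stmt_16 (α p : ℝ) (hα : 0 < α) (hp : 1 + α < p)
    (w : ℕ → ℝ → ℝ) (hmeas : ∀ k, Measurable (w k)) (h0 : ∀ k x, 0 ≤ w k x)
    (hmono : ∀ k x, w (k + 1) x ≤ w k x) (hone : ∀ x, w 0 x = 1)
    (ε : ℕ → ℝ) (hε : ∀ k, 0 < ε k)
    (hprod : ∃ M : ℝ, ∀ K : ℕ, ∏ k ∈ Finset.range K, (1 + ε k) ≤ M)
    (C : ℝ≥0∞) (hC : 0 < C) (hCfin : C < ⊤)
    (A : (ℝ → ℝ) → ℝ → ℝ → ℝ≥0∞)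
    (hA : ∀ v a b, A v a b =
      ((ENNReal.ofReal (b - a))⁻¹ * ∫⁻ x in Set.Icc a b, ENNReal.ofReal (v x)) *
        ((ENNReal.ofReal (b - a))⁻¹ *
            ∫⁻ x in Set.Icc a b, ENNReal.ofReal (v x) ^ (1 / (1 - p))) ^ (p - 1))
    (hstep : ∀ k : ℕ, 1 ≤ k → ∀ a b : ℝ, a < b →
      A (w k) a b ≤ max ((ENNReal.ofReal (1 + ε k)) ^ p * A (w (k - 1)) a b) C) :
    ∃ C' : ℝ≥0∞, C' < ⊤ ∧ ∀ a b : ℝ, a < b → A (fun x => ⨅ k, w k x) a b ≤ C' := by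
  obtain ⟨M, hM⟩ := hprod
  have hp1 : (1:ℝ) < p := by linarith
  have hp0 : (0:ℝ) < p := by linarith
  have hpm1 : (0:ℝ) < p - 1 := by linarith
  have hq : 1 / (1 - p) < 0 := div_neg_of_pos_of_neg one_pos (by linarith)
  have hε1 : ∀ k, (1:ℝ) ≤ 1 + ε k := fun k => by linarith [hε k]
  have hε0 : ∀ k, (0:ℝ) ≤ 1 + ε k := fun k => by linarith [hε k]
  -- the uniform bound
  set B : ℝ≥0∞ := (ENNReal.ofReal M) ^ p * max 1 C with hB
  have hBfin : B < ⊤ := by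
    refine ENNReal.mul_lt_top ?_ ?_
    · exact ENNReal.rpow_lt_top_of_nonneg hp0.le ENNReal.ofReal_ne_top
    · exact max_lt ENNReal.one_lt_top hCfin
  -- base case: A (w 0) a b = 1
  have hbase : ∀ a b : ℝ, a < b → A (w 0) a b = 1 := by
    intro a b hab
    have hN0 : ENNReal.ofReal (b - a) ≠ 0 := by
      simp only [ne_eq, ENNReal.ofReal_eq_zero, not_le]; linarith
    have hNt : ENNReal.ofReal (b - a) ≠ ⊤ := ENNReal.ofReal_ne_top
    rw [hA]
    have h1 : ∀ x, ENNReal.ofReal (w 0 x) = 1 := fun x => by simp [hone x]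
    simp only [h1, ENNReal.one_rpow]
    rw [setLIntegral_one, Real.volume_Icc, ENNReal.inv_mul_cancel hN0 hNt]
    simp
  -- partial products
  have hP1 : ∀ k : ℕ, (1:ℝ) ≤ ∏ j ∈ Finset.Icc 1 k, (1 + ε j) := by
    intro k
    have := Finset.prod_le_prod (s := Finset.Icc 1 k) (f := fun _ => (1:ℝ))
      (g := fun j => 1 + ε j) (fun i _ => zero_le_one) (fun i _ => hε1 i)
    simpa using this
  have hPub : ∀ k : ℕ, ∏ j ∈ Finset.Icc 1 k, (1 + ε j) ≤ M := by
    intro k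
    have hins : Finset.range (k + 1) = insert 0 (Finset.Icc 1 k) := by
      ext j
      simp only [Finset.mem_range, Finset.mem_insert, Finset.mem_Icc]
      omega
    have h0n : (0:ℕ) ∉ Finset.Icc 1 k := by simp
    have hre : ∏ j ∈ Finset.range (k + 1), (1 + ε j)
        = (1 + ε 0) * ∏ j ∈ Finset.Icc 1 k, (1 + ε j) := by
      rw [hins, Finset.prod_insert h0n]
    calc ∏ j ∈ Finset.Icc 1 k, (1 + ε j)
        ≤ (1 + ε 0) * ∏ j ∈ Finset.Icc 1 k, (1 + ε j) :=
          le_mul_of_one_le_left (by linarith [hP1 k]) (hε1 0)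
      _ = ∏ j ∈ Finset.range (k + 1), (1 + ε j) := hre.symm
      _ ≤ M := hM (k + 1)
  -- inductive bound on A (w k)
  have key : ∀ k : ℕ, ∀ a b : ℝ, a < b →
      A (w k) a b ≤ (ENNReal.ofReal (∏ j ∈ Finset.Icc 1 k, (1 + ε j))) ^ p * max 1 C := by
    intro k
    induction k with
    | zero =>
      intro a b hab
      rw [hbase a b hab]
      have he : (Finset.Icc 1 0 : Finset ℕ) = ∅ := rfl
      rw [he, Finset.prod_empty, ENNReal.ofReal_one, ENNReal.one_rpow, one_mul]
      exact le_max_left 1 C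
    | succ n ih =>
      intro a b hab
      have hs := hstep (n + 1) (by omega) a b hab
      have hn : n + 1 - 1 = n := rfl
      rw [hn] at hs
      have honeleP : (1:ℝ≥0∞) ≤ (ENNReal.ofReal (∏ j ∈ Finset.Icc 1 (n+1), (1 + ε j))) ^ p := by
        rw [← ENNReal.one_rpow p]
        exact ENNReal.rpow_le_rpow (by
          rw [← ENNReal.ofReal_one]
          exact ENNReal.ofReal_le_ofReal (hP1 (n+1))) hp0.le
      refine hs.trans (max_le ?_ ?_)
      · calc (ENNReal.ofReal (1 + ε (n+1))) ^ p * A (w n) a b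
            ≤ (ENNReal.ofReal (1 + ε (n+1))) ^ p *
              ((ENNReal.ofReal (∏ j ∈ Finset.Icc 1 n, (1 + ε j))) ^ p * max 1 C) :=
              mul_le_mul_right (ih a b hab) _
          _ = (ENNReal.ofReal (∏ j ∈ Finset.Icc 1 (n+1), (1 + ε j))) ^ p * max 1 C := by
              rw [← mul_assoc, ← ENNReal.mul_rpow_of_nonneg _ _ hp0.le, ← ENNReal.ofReal_mul
                (hε0 (n+1))]
              congr 3
              rw [Finset.prod_Icc_succ_top (by omega)]
              ring
      · exact le_trans (le_max_right 1 C) (le_mul_of_one_le_left' honeleP)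
  have Abound : ∀ k : ℕ, ∀ a b : ℝ, a < b → A (w k) a b ≤ B := by
    intro k a b hab
    refine (key k a b hab).trans (mul_le_mul_left ?_ _)
    exact ENNReal.rpow_le_rpow (ENNReal.ofReal_le_ofReal (hPub k)) hp0.le
  -- pass to the limit
  refine ⟨B, hBfin, fun a b hab => ?_⟩
  have hwanti : ∀ x, Antitone (fun k => w k x) :=
    fun x => antitone_nat_of_succ_le (fun k => hmono k x)
  set g : ℕ → ℝ → ℝ≥0∞ := fun k x => ENNReal.ofReal (w k x) with hg
  have hganti : ∀ x, Antitone (fun k => g k x) :=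
    fun x k m hkm => ENNReal.ofReal_le_ofReal (hwanti x hkm)
  have hgmeas : ∀ k, Measurable (g k) := fun k => (hmeas k).ennreal_ofReal
  -- first factor: monotone (decreasing) convergence
  have hI : (∫⁻ x in Icc a b, ENNReal.ofReal (⨅ k, w k x)) =
      ⨅ k, ∫⁻ x in Icc a b, g k x := by
    have heq : ∀ x, ENNReal.ofReal (⨅ k, w k x) = ⨅ k, g k x := fun x =>
      ENNReal.ofReal_iInf _
    simp_rw [heq]
    refine lintegral_iInf hgmeas (fun k m hkm x => hganti x hkm) ?_
    have h2 : (∫⁻ x in Icc a b, g 0 x) = volume (Icc a b) := by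
      have h3 : ∀ x, g 0 x = 1 := fun x => by simp [hg, hone x]
      simp_rw [h3]; exact setLIntegral_one _
    rw [h2, Real.volume_Icc]
    exact ENNReal.ofReal_ne_top
  -- second factor: monotone convergence upward
  have hJ : (∫⁻ x in Icc a b, ENNReal.ofReal (⨅ k, w k x) ^ (1 / (1 - p))) =
      ⨆ k, ∫⁻ x in Icc a b, g k x ^ (1 / (1 - p)) := by
    have heq : ∀ x, ENNReal.ofReal (⨅ k, w k x) ^ (1 / (1 - p)) =
        ⨆ k, g k x ^ (1 / (1 - p)) := by
      intro x
      rw [ENNReal.ofReal_iInf]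
      exact aux_rpow_iInf_neg _ hq
    simp_rw [heq]
    refine lintegral_iSup (fun k => ENNReal.continuous_rpow_const.measurable.comp (hgmeas k)) ?_
    intro k m hkm x
    have h1 : g m x ≤ g k x := hganti x hkm
    calc g k x ^ (1 / (1 - p)) = (g k x ^ (-(1 / (1 - p))))⁻¹ := by
          rw [← ENNReal.rpow_neg, neg_neg]
      _ ≤ (g m x ^ (-(1 / (1 - p))))⁻¹ :=
          ENNReal.inv_le_inv.2 (ENNReal.rpow_le_rpow h1 (by linarith))
      _ = g m x ^ (1 / (1 - p)) := by rw [← ENNReal.rpow_neg, neg_neg]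
  -- combine
  rw [hA, hI, hJ]
  set N := (ENNReal.ofReal (b - a))⁻¹
  calc (N * ⨅ k, ∫⁻ x in Icc a b, g k x) *
        (N * ⨆ k, ∫⁻ x in Icc a b, g k x ^ (1 / (1 - p))) ^ (p - 1)
      = (N * ⨅ k, ∫⁻ x in Icc a b, g k x) *
        ⨆ k, (N * ∫⁻ x in Icc a b, g k x ^ (1 / (1 - p))) ^ (p - 1) := by
        rw [ENNReal.mul_iSup, aux_rpow_iSup _ hpm1]
    _ = ⨆ k, (N * ⨅ m, ∫⁻ x in Icc a b, g m x) *
        (N * ∫⁻ x in Icc a b, g k x ^ (1 / (1 - p))) ^ (p - 1) := ENNReal.mul_iSup _ _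
    _ ≤ B := by
        refine iSup_le fun k => ?_
        refine le_trans ?_ (Abound k a b hab)
        rw [hA]
        refine mul_le_mul_left (mul_le_mul_right ?_ _) _
        exact iInf_le _ k
end

section
/- Let α > 0, p > 1 + α, q ∈ ℝ, and L > 0. Let w_{k−1} : ℝ → [0,∞) be Borel with L/2 ≤ w_{k−1} ≤ 2L on [q − 4R, q + 4R] for some R > 0, let 0 < r < R with 8r ≤ ε(R − r) for some ε > 0, set g(x) = 2L|(x−q)/r|^α and w_k = min{w_{k−1}, g}. Then ∫_{q−r}^{q+r} w_k dx ≤ ε ∫_{q+r}^{q+R} w_{k−1} dx and likewise ∫_{q−r}^{q+r} w_k dx ≤ ε ∫_{q−R}^{q−r} w_{k−1} dx. -/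
open MeasureTheory Set
open scoped ENNReal

/-- the large-interval perturbation estimate: the mass added by the
truncated cusp weight `w_k = min{w_{k-1}, 2L|(x-q)/r|^α}` on `(q-r, q+r)` is at most an
`ε`-fraction of the mass of `w_{k-1}` on each adjacent side interval. -/
theorem stmt_19 (α p q L R r ε : ℝ) (hα : 0 < α) (hp : 1 + α < p) (hL : 0 < L)
    (hR : 0 < R) (hr : 0 < r) (hrR : r < R) (hε : 0 < ε) (h8 : 8 * r ≤ ε * (R - r))
    (w : ℝ → ℝ) (hw : Measurable w)
    (hwb : ∀ x ∈ Set.Icc (q - 4 * R) (q + 4 * R), L / 2 ≤ w x ∧ w x ≤ 2 * L) :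
    (∫ x in (q - r)..(q + r), min (w x) (2 * L * |(x - q) / r| ^ α)) ≤
        ε * ∫ x in (q + r)..(q + R), w x ∧
    (∫ x in (q - r)..(q + r), min (w x) (2 * L * |(x - q) / r| ^ α)) ≤
        ε * ∫ x in (q - R)..(q - r), w x := by
  have hsub1 : Icc (q - r) (q + r) ⊆ Icc (q - 4 * R) (q + 4 * R) :=
    Icc_subset_Icc (by nlinarith) (by nlinarith)
  have hsub2 : Icc (q + r) (q + R) ⊆ Icc (q - 4 * R) (q + 4 * R) :=
    Icc_subset_Icc (by nlinarith) (by nlinarith)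
  have hsub3 : Icc (q - R) (q - r) ⊆ Icc (q - 4 * R) (q + 4 * R) :=
    Icc_subset_Icc (by nlinarith) (by nlinarith)
  set g : ℝ → ℝ := fun x => 2 * L * |(x - q) / r| ^ α with hg
  have hgmeas : Measurable g := by
    apply Measurable.mul measurable_const
    exact ((measurable_id.sub_const q).div_const r).abs.pow_const α
  -- generic integrability of bounded measurable functions on subintervals
  have hint : ∀ (f : ℝ → ℝ), Measurable f → ∀ a b : ℝ, a ≤ b →
      (∀ x ∈ Icc a b, ‖f x‖ ≤ 2 * L) → IntervalIntegrable f volume a b := by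
    intro f hf a b hab hb
    apply IntegrableOn.intervalIntegrable
    rw [uIcc_of_le hab]
    apply Measure.integrableOn_of_bounded (M := 2 * L) measure_Icc_lt_top.ne
      hf.aestronglyMeasurable
    filter_upwards [ae_restrict_mem measurableSet_Icc] with x hx using hb x hx
  have hintmin : IntervalIntegrable (fun x => min (w x) (g x)) volume (q - r) (q + r) := by
    apply hint _ (hw.min hgmeas) _ _ (by linarith)
    intro x hx
    have h := hwb x (hsub1 hx)
    rw [Real.norm_eq_abs, abs_le]
    constructor
    · have hg0 : (0:ℝ) ≤ g x := by
        simp only [hg]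
        positivity
      have := le_min (by linarith : -(2*L) ≤ w x) (by linarith : -(2*L) ≤ g x)
      linarith
    · exact le_trans (min_le_left _ _) h.2
  have hintw2 : IntervalIntegrable w volume (q + r) (q + R) := by
    apply hint _ hw _ _ (by linarith)
    intro x hx
    have h := hwb x (hsub2 hx)
    rw [Real.norm_eq_abs, abs_le]; constructor <;> nlinarith [h.1, h.2]
  have hintw3 : IntervalIntegrable w volume (q - R) (q - r) := by
    apply hint _ hw _ _ (by linarith)
    intro x hx
    have h := hwb x (hsub3 hx)
    rw [Real.norm_eq_abs, abs_le]; constructor <;> nlinarith [h.1, h.2]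
  -- upper bound on the small-interval integral
  have hup : (∫ x in (q - r)..(q + r), min (w x) (g x)) ≤ 4 * r * L := by
    have := intervalIntegral.integral_mono_on (by linarith : q - r ≤ q + r)
      hintmin (intervalIntegrable_const (c := 2 * L))
      (fun x hx => le_trans (min_le_left _ _) (hwb x (hsub1 hx)).2)
    rw [intervalIntegral.integral_const, smul_eq_mul] at this
    nlinarith [this]
  -- lower bounds on the side integrals
  have hlo2 : L / 2 * (R - r) ≤ ∫ x in (q + r)..(q + R), w x := by
    have := intervalIntegral.integral_mono_on (by linarith : q + r ≤ q + R)
      (intervalIntegrable_const (c := L / 2)) hintw2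
      (fun x hx => (hwb x (hsub2 hx)).1)
    rw [intervalIntegral.integral_const, smul_eq_mul] at this
    nlinarith [this]
  have hlo3 : L / 2 * (R - r) ≤ ∫ x in (q - R)..(q - r), w x := by
    have := intervalIntegral.integral_mono_on (by linarith : q - R ≤ q - r)
      (intervalIntegrable_const (c := L / 2)) hintw3
      (fun x hx => (hwb x (hsub3 hx)).1)
    rw [intervalIntegral.integral_const, smul_eq_mul] at this
    nlinarith [this]
  constructor
  · nlinarith [mul_le_mul_of_nonneg_left hlo2 hε.le]
  · nlinarith [mul_le_mul_of_nonneg_left hlo3 hε.le]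
end
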